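/- arXiv:2105.07283 — 10 statements merged into one kernel-verified Lean document; each statement's English description precedes it below -/
import Mathlib

section
/- Let 𝒢 be a sub-σ-field of ℋ. Then 𝒢 is sufficient for ℋ with respect to A (i.e. P[A | ℋ] = P[A | 𝒢] almost surely) if and only if the cost-weighted Bayes losses agree: L*_ℋ(t) = L*_𝒢(t) for all t ∈ (0,1). -/
open MeasureTheory

/-- Cost-weighted mean loss `L(H, t) = (1 - t) P[A ∩ Hᶜ] + t P[Aᶜ ∩ H]`. -/
noncomputable def cwLoss {Ω : Type*} {mΩ : MeasurableSpace Ω} (P : Measure Ω) (A H : Set Ω)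
    (t : ℝ) : ℝ :=
  (1 - t) * (P (A ∩ Hᶜ)).toReal + t * (P (Aᶜ ∩ H)).toReal

/-- Cost-weighted Bayes loss `L*_ℱ(t) = inf_{F ∈ ℱ} L(F, t)`. -/
noncomputable def bayesLoss {Ω : Type*} {mΩ : MeasurableSpace Ω} (P : Measure Ω) (A : Set Ω)
    (F : MeasurableSpace Ω) (t : ℝ) : ℝ :=
  ⨅ H : {H : Set Ω // MeasurableSet[F] H}, cwLoss P A H t

section Aux

variable {Ω : Type*} {mΩ : MeasurableSpace Ω} {P : Measure Ω} [IsProbabilityMeasure P]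

lemma setIntegral_condexp_indicator {A : Set Ω} (hA : MeasurableSet A)
    {m : MeasurableSpace Ω} (hm : m ≤ mΩ) {S : Set Ω} (hS : MeasurableSet[mΩ] S)
    (hSm : MeasurableSet[m] S) :
    ∫ x in S, (P[A.indicator (fun _ => (1 : ℝ)) | m]) x ∂P = (P (A ∩ S)).toReal := by
  letI : MeasurableSpace Ω := mΩ
  have hind : Integrable (A.indicator (fun _ => (1 : ℝ))) P :=
    Integrable.indicator (μ := P) (integrable_const 1) hA
  rw [setIntegral_condExp hm hind hSm, ← integral_indicator (μ := P) hS,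
    Set.indicator_indicator, integral_indicator_const (μ := P) _ (hS.inter hA),
    smul_eq_mul, mul_one, Set.inter_comm]
  rfl

lemma cwLoss_eq_integral {A : Set Ω} (hA : MeasurableSet A)
    {m : MeasurableSpace Ω} (hm : m ≤ mΩ) {H : Set Ω} (hH : MeasurableSet[m] H) (t : ℝ) :
    cwLoss P A H t
      = (∫ x in Hᶜ, (1 - t) * (P[A.indicator (fun _ => (1 : ℝ)) | m]) x ∂P)
        + ∫ x in H, t * (1 - (P[A.indicator (fun _ => (1 : ℝ)) | m]) x) ∂P := by
  letI : MeasurableSpace Ω := mΩ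
  set f := P[A.indicator (fun _ => (1 : ℝ)) | m] with hfdef
  have hHm : MeasurableSet[mΩ] H := hm _ hH
  have hfi : Integrable f P := integrable_condExp
  have h1 : ∫ x in Hᶜ, f x ∂P = (P (A ∩ Hᶜ)).toReal :=
    setIntegral_condexp_indicator hA hm hHm.compl hH.compl
  have h2 : ∫ x in H, f x ∂P = (P (A ∩ H)).toReal :=
    setIntegral_condexp_indicator hA hm hHm hH
  have h3 : ∫ x in H, (1 - f x) ∂P = (P H).toReal - (P (A ∩ H)).toReal := by
    have hone : Integrable (fun _ : Ω => (1 : ℝ)) (P.restrict H) := integrable_const 1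
    have hfr : Integrable f (P.restrict H) := Integrable.restrict (μ := P) hfi
    rw [integral_sub hone hfr, h2, setIntegral_const (μ := P) (1 : ℝ), smul_eq_mul, mul_one]
    rfl
  have h4 : (P (Aᶜ ∩ H)).toReal = (P H).toReal - (P (A ∩ H)).toReal := by
    have hsum : P (H ∩ A) + P (H \ A) = P H := measure_inter_add_diff (μ := P) H hA
    have hd : H \ A = Aᶜ ∩ H := by rw [Set.diff_eq, Set.inter_comm]
    rw [hd] at hsum
    have h5 := congrArg ENNReal.toReal hsum
    rw [ENNReal.toReal_add (measure_ne_top _ _) (measure_ne_top _ _)] at h5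
    rw [Set.inter_comm A H, ← h5]
    ring
  rw [integral_const_mul, integral_const_mul, cwLoss, h1, h3, h4]

lemma bayesLoss_eq_integral {A : Set Ω} (hA : MeasurableSet A)
    {m : MeasurableSpace Ω} (hm : m ≤ mΩ) (t : ℝ) :
    bayesLoss P A m t
      = (1 - t) * (P A).toReal
        - ∫ x, max ((P[A.indicator (fun _ => (1 : ℝ)) | m]) x - t) 0 ∂P := by
  letI : MeasurableSpace Ω := mΩ
  set f := P[A.indicator (fun _ => (1 : ℝ)) | m] with hfdef
  set φ : Ω → ℝ := fun x => (1 - t) * f x - max (f x - t) 0 with hφdef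
  have hind : Integrable (A.indicator (fun _ => (1 : ℝ))) P :=
    Integrable.indicator (μ := P) (integrable_const 1) hA
  have hfi : Integrable f P := integrable_condExp
  have hmaxi : Integrable (fun x => max (f x - t) 0) P :=
    (hfi.sub (integrable_const (μ := P) t)).pos_part
  have hφi : Integrable φ P := (hfi.const_mul _).sub hmaxi
  have hti : Integrable (fun x => t * (1 - f x)) P :=
    ((integrable_const (μ := P) 1).sub hfi).const_mul t
  have hb1 : ∀ x, φ x ≤ (1 - t) * f x := fun x => sub_le_self _ (le_max_right _ _)
  have hb2 : ∀ x, φ x ≤ t * (1 - f x) := by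
    intro x
    have h := le_max_left (f x - t) 0
    simp only [hφdef]
    nlinarith
  have key : ∀ H : Set Ω, MeasurableSet[m] H → ∫ x, φ x ∂P ≤ cwLoss P A H t := by
    intro H hH
    have hHm : MeasurableSet[mΩ] H := hm _ hH
    rw [cwLoss_eq_integral hA hm hH t]
    calc ∫ x, φ x ∂P = (∫ x in Hᶜ, φ x ∂P) + ∫ x in H, φ x ∂P :=
          (integral_add_compl (μ := P) hHm hφi).symm.trans (add_comm _ _)
      _ ≤ (∫ x in Hᶜ, (1 - t) * f x ∂P) + ∫ x in H, t * (1 - f x) ∂P := by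
          refine add_le_add ?_ ?_
          · exact integral_mono (Integrable.restrict (μ := P) hφi)
              (Integrable.restrict (μ := P) (hfi.const_mul _)) hb1
          · exact integral_mono (Integrable.restrict (μ := P) hφi)
              (Integrable.restrict (μ := P) hti) hb2
  set H₀ : Set Ω := {x | t < f x} with hH₀def
  have hH₀ : MeasurableSet[m] H₀ :=
    measurableSet_lt measurable_const stronglyMeasurable_condExp.measurable
  have hH₀m : MeasurableSet[mΩ] H₀ := hm _ hH₀
  have heq : cwLoss P A H₀ t = ∫ x, φ x ∂P := by
    rw [cwLoss_eq_integral hA hm hH₀ t]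
    have e1 : ∫ x in H₀ᶜ, (1 - t) * f x ∂P = ∫ x in H₀ᶜ, φ x ∂P := by
      refine setIntegral_congr_fun (μ := P) hH₀m.compl fun x hx => ?_
      have hx' : f x ≤ t := le_of_not_gt hx
      simp only [hφdef, max_eq_right (sub_nonpos.2 hx'), sub_zero]
    have e2 : ∫ x in H₀, t * (1 - f x) ∂P = ∫ x in H₀, φ x ∂P := by
      refine setIntegral_congr_fun (μ := P) hH₀m fun x hx => ?_
      have hx' : t ≤ f x := le_of_lt hx
      simp only [hφdef, max_eq_left (sub_nonneg.2 hx')]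
      ring
    rw [e1, e2]
    exact (add_comm _ _).trans (integral_add_compl (μ := P) hH₀m hφi)
  have hbayes : bayesLoss P A m t = ∫ x, φ x ∂P := by
    haveI : Nonempty {H : Set Ω // MeasurableSet[m] H} := ⟨⟨∅, @MeasurableSet.empty _ m⟩⟩
    refine le_antisymm ?_ (le_ciInf fun H => key H H.2)
    have hbdd : BddBelow (Set.range fun H : {H : Set Ω // MeasurableSet[m] H} =>
        cwLoss P A (H : Set Ω) t) := by
      refine ⟨∫ x, φ x ∂P, ?_⟩
      rintro _ ⟨H, rfl⟩
      exact key H H.2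
    calc bayesLoss P A m t ≤ cwLoss P A H₀ t := ciInf_le hbdd ⟨H₀, hH₀⟩
      _ = ∫ x, φ x ∂P := heq
  have hintf : ∫ x, f x ∂P = (P A).toReal := by
    rw [hfdef, integral_condExp hm, integral_indicator_const (μ := P) _ hA,
      smul_eq_mul, mul_one]
    rfl
  rw [hbayes]
  simp only [hφdef]
  rw [integral_sub (hfi.const_mul _) hmaxi, integral_const_mul, hintf]

end Aux

/-- **Theorem 1 (characterisation of sufficiency)**: a sub-σ-field `𝒢 ⊆ ℋ` is sufficient for
`ℋ` with respect to `A` (i.e. `P[A | ℋ] = P[A | 𝒢]` a.s.) if and only if the cost-weighted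
Bayes losses of `ℋ` and `𝒢` agree for all `t ∈ (0, 1)`. -/
theorem sufficiency_iff_equal_bayes_loss
    {Ω : Type*} {mΩ : MeasurableSpace Ω} {P : Measure Ω} [IsProbabilityMeasure P]
    {A : Set Ω} (hA : MeasurableSet A) (hA0 : 0 < P A) (hA1 : P A < 1)
    {mH : MeasurableSpace Ω} (hH : mH ≤ mΩ) (hAH : ¬ MeasurableSet[mH] A)
    {mG : MeasurableSpace Ω} (hG : mG ≤ mH) :
    (P[A.indicator (fun _ => (1 : ℝ)) | mH] =ᵐ[P] P[A.indicator (fun _ => (1 : ℝ)) | mG])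
      ↔ ∀ t ∈ Set.Ioo (0 : ℝ) 1, bayesLoss P A mH t = bayesLoss P A mG t := by
  letI : MeasurableSpace Ω := mΩ
  have hGΩ : mG ≤ mΩ := hG.trans hH
  set f := P[A.indicator (fun _ => (1 : ℝ)) | mH] with hfdef
  set g := P[A.indicator (fun _ => (1 : ℝ)) | mG] with hgdef
  have hind : Integrable (A.indicator (fun _ => (1 : ℝ))) P :=
    Integrable.indicator (μ := P) (integrable_const 1) hA
  have hfi : Integrable f P := integrable_condExp
  have hgi : Integrable g P := integrable_condExp
  constructor
  · intro hfg t _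
    rw [bayesLoss_eq_integral hA hH t, bayesLoss_eq_integral hA hGΩ t, ← hfdef, ← hgdef]
    congr 1
    exact integral_congr_ae (hfg.mono fun x hx => by simp [hx])
  · intro hL
    have hI : ∀ t ∈ Set.Ioo (0 : ℝ) 1,
        ∫ x, max (f x - t) 0 ∂P = ∫ x, max (g x - t) 0 ∂P := by
      intro t ht
      have h := hL t ht
      rw [bayesLoss_eq_integral hA hH t, bayesLoss_eq_integral hA hGΩ t,
        ← hfdef, ← hgdef] at h
      linarith
    have hgf : g =ᵐ[P] P[f | mG] := (condExp_condExp_of_le hG hH).symm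
    have key : ∀ t : ℝ, t ∈ Set.Ioo (0 : ℝ) 1 → ∀ᵐ x ∂P, g x < t → f x ≤ t := by
      intro t ht
      set pf : Ω → ℝ := fun x => max (f x - t) 0 with hpfdef
      set pg : Ω → ℝ := fun x => max (g x - t) 0 with hpgdef
      have hpfi : Integrable pf P := (hfi.sub (integrable_const (μ := P) t)).pos_part
      have hpgi : Integrable pg P := (hgi.sub (integrable_const (μ := P) t)).pos_part
      set u := P[pf | mG] with hudef
      have hui : Integrable u P := integrable_condExp
      have hnn : 0 ≤ᵐ[P] u := condExp_nonneg (ae_of_all _ fun x => le_max_right _ _)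
      have hsub : P[(fun x => f x - t) | mG] =ᵐ[P] fun x => g x - t := by
        have h1 : (fun x => f x - t) = f - fun _ => t := rfl
        rw [h1]
        refine (condExp_sub hfi (integrable_const t) mG).trans ?_
        rw [condExp_const hGΩ t]
        filter_upwards [hgf] with x hx
        simp [hx]
      have hmono : P[(fun x => f x - t) | mG] ≤ᵐ[P] u :=
        condExp_mono (hfi.sub (integrable_const t)) hpfi
          (ae_of_all _ fun x => le_max_left _ _)
      have h1 : pg ≤ᵐ[P] u := by
        filter_upwards [hnn, hsub, hmono] with x h0 hs hmx
        refine max_le ?_ h0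
        rw [← hs]
        exact hmx
      have h2 : ∫ x, u x ∂P = ∫ x, pg x ∂P := by
        rw [hudef, integral_condExp hGΩ]
        exact hI t ht
      have h3 : u =ᵐ[P] pg := by
        have hz : ∫ x, (u x - pg x) ∂P = 0 := by
          rw [integral_sub hui hpgi, h2, sub_self]
        have hnn' : 0 ≤ᵐ[P] fun x => u x - pg x := h1.mono fun x hx => sub_nonneg.2 hx
        have h6 := (integral_eq_zero_iff_of_nonneg_ae hnn' (hui.sub hpgi)).1 hz
        filter_upwards [h6] with x hx
        have hx' : u x - pg x = 0 := hx
        linarith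
      set S : Set Ω := {x | g x < t} with hSdef
      have hSmG : MeasurableSet[mG] S :=
        measurableSet_lt stronglyMeasurable_condExp.measurable measurable_const
      have hS : MeasurableSet[mΩ] S := hGΩ _ hSmG
      have h4 : ∫ x in S, pf x ∂P = 0 := by
        calc ∫ x in S, pf x ∂P = ∫ x in S, u x ∂P := (setIntegral_condExp hGΩ hpfi hSmG).symm
          _ = ∫ x in S, pg x ∂P := integral_congr_ae (ae_restrict_of_ae h3)
          _ = ∫ x in S, (0 : ℝ) ∂P := by
              refine setIntegral_congr_fun (μ := P) hS fun x hx => ?_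
              have hx' : g x < t := hx
              exact max_eq_right (by linarith)
          _ = 0 := integral_zero _ _
      have h5 : pf =ᵐ[P.restrict S] 0 :=
        (integral_eq_zero_iff_of_nonneg_ae (ae_of_all _ fun x => le_max_right _ _)
          (Integrable.restrict (μ := P) hpfi)).1 h4
      have h6 := (ae_restrict_iff' (μ := P) hS).1 h5
      filter_upwards [h6] with x hx hgx
      have h8 : max (f x - t) 0 = 0 := hx hgx
      have h7 := le_max_left (f x - t) 0
      rw [h8] at h7
      linarith
    have hq : ∀ᵐ x ∂P, ∀ q : ℚ, (q : ℝ) ∈ Set.Ioo (0 : ℝ) 1 → (g x < q → f x ≤ q) := by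
      rw [ae_all_iff]
      intro q
      by_cases hmem : (q : ℝ) ∈ Set.Ioo (0 : ℝ) 1
      · exact (key q hmem).mono fun x h _ => h
      · exact ae_of_all _ fun x h => absurd h hmem
    have hg0 : ∀ᵐ x ∂P, 0 ≤ g x :=
      condExp_nonneg (ae_of_all _ fun x => Set.indicator_nonneg (fun _ _ => zero_le_one) x)
    have hf1 : ∀ᵐ x ∂P, f x ≤ 1 := by
      have hle : (A.indicator (fun _ => (1 : ℝ))) ≤ᵐ[P] fun _ => (1 : ℝ) := by
        refine ae_of_all _ fun x => ?_
        by_cases hx : x ∈ A <;> simp [Set.indicator_of_mem, Set.indicator_of_notMem, hx]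
      have h8 := condExp_mono (m := mH) hind (integrable_const 1) hle
      rw [condExp_const hH (1 : ℝ)] at h8
      exact h8
    have hle : f ≤ᵐ[P] g := by
      filter_upwards [hq, hg0, hf1] with x hx h0 h1
      by_contra hc
      push_neg at hc
      obtain ⟨q, hq1, hq2⟩ := exists_rat_btwn hc
      have hmem : (q : ℝ) ∈ Set.Ioo (0 : ℝ) 1 :=
        ⟨lt_of_le_of_lt h0 hq1, lt_of_lt_of_le hq2 h1⟩
      exact absurd (hx q hmem hq1) (not_le.2 hq2)
    have hint : ∫ x, f x ∂P = ∫ x, g x ∂P := by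
      rw [hfdef, hgdef, integral_condExp hH, integral_condExp hGΩ]
    have hz : ∫ x, (g x - f x) ∂P = 0 := by
      rw [integral_sub hgi hfi, hint, sub_self]
    have hnn : 0 ≤ᵐ[P] fun x => g x - f x := hle.mono fun x hx => sub_nonneg.2 hx
    have h9 := (integral_eq_zero_iff_of_nonneg_ae hnn (hgi.sub hfi)).1 hz
    filter_upwards [h9] with x hx
    have hx' : g x - f x = 0 := hx
    linarith
end

section
/- Let T : (Ω, ℋ) → (Ω_T, 𝒜_T) be a measurable mapping into a measurable space and let σ(T) ⊂ ℋ be the σ-field generated by T. Then the following are equivalent: (a) L*_ℋ(t) = L*_{σ(T)}(t) for all t ∈ (0,1); (b) T is sufficient for ℋ with respect to A, i.e. P[A | ℋ] = P[A | σ(T)] almost surely; (c) there is a measurable function G : (Ω_T, 𝒜_T) → ℝ such that P[A | ℋ] = G(T) almost surely. -/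
open MeasureTheory Filter Topology

lemma factor_simple {Ω ΩT : Type*} {mT : MeasurableSpace ΩT} {T : Ω → ΩT}
    (φ : @SimpleFunc Ω (MeasurableSpace.comap T mT) ℝ) :
    ∃ g : ΩT → ℝ, Measurable g ∧ ∀ ω, φ ω = g (T ω) := by
  refine @SimpleFunc.induction Ω ℝ (MeasurableSpace.comap T mT) _
    (fun ψ => ∃ g : ΩT → ℝ, Measurable g ∧ ∀ ω, ψ ω = g (T ω)) ?_ ?_ φ
  · intro c s hs
    obtain ⟨B, hB, hBs⟩ := hs
    refine ⟨B.indicator fun _ => c, measurable_const.indicator hB, fun ω => ?_⟩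
    simp only [SimpleFunc.piecewise_apply, SimpleFunc.coe_const, Function.const_apply,
      SimpleFunc.coe_zero, Pi.zero_apply, Set.indicator]
    have : ω ∈ s ↔ T ω ∈ B := by rw [← hBs]; rfl
    by_cases h : T ω ∈ B
    · exact (if_pos (this.mpr h)).trans (if_pos h).symm
    · exact (if_neg (fun hh => h (this.mp hh))).trans (if_neg h).symm
  · rintro ψ₁ ψ₂ - ⟨g₁, hg₁, he₁⟩ ⟨g₂, hg₂, he₂⟩
    exact ⟨g₁ + g₂, hg₁.add hg₂, fun ω => by simp [he₁ ω, he₂ ω]⟩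

lemma doob_dynkin {Ω ΩT : Type*} {mT : MeasurableSpace ΩT} {T : Ω → ΩT} {Y : Ω → ℝ}
    (hY : StronglyMeasurable[MeasurableSpace.comap T mT] Y) :
    ∃ G : ΩT → ℝ, Measurable G ∧ ∀ ω, Y ω = G (T ω) := by
  classical
  choose g hgm hgev using fun n => factor_simple (hY.approx n)
  set C : Set ΩT := {x | ∃ c, Tendsto (fun n => g n x) atTop (𝓝 c)} with hC
  have hCm : MeasurableSet C := measurableSet_exists_tendsto hgm
  set G : ΩT → ℝ := fun x => if x ∈ C then limUnder atTop (fun n => g n x) else 0 with hG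
  have hGtend : ∀ x, Tendsto (fun n => (C.indicator (g n)) x) atTop (𝓝 (G x)) := by
    intro x
    by_cases hx : x ∈ C
    · have : (fun n => (C.indicator (g n)) x) = fun n => g n x := by
        funext n; exact Set.indicator_of_mem hx _
      rw [this, hG]; simp only [if_pos hx]
      exact tendsto_nhds_limUnder hx
    · have : (fun n => (C.indicator (g n)) x) = fun _ => (0:ℝ) := by
        funext n; exact Set.indicator_of_notMem hx _
      rw [this, hG]; simp only [if_neg hx]
      exact tendsto_const_nhds
  have hGm : Measurable G :=
    measurable_of_tendsto_metrizable' atTop (fun n => (hgm n).indicator hCm)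
      (tendsto_pi_nhds.mpr hGtend)
  refine ⟨G, hGm, fun ω => ?_⟩
  have htd : Tendsto (fun n => g n (T ω)) atTop (𝓝 (Y ω)) := by
    have h := hY.tendsto_approx ω
    have : (fun n => (hY.approx n) ω) = fun n => g n (T ω) := by
      funext n; exact hgev n ω
    rwa [this] at h
  have hTC : T ω ∈ C := ⟨Y ω, htd⟩
  rw [hG]; simp only [if_pos hTC]
  exact (htd.limUnder_eq).symm

lemma cwLoss_eq {Ω : Type*} {m : MeasurableSpace Ω} {mΩ : MeasurableSpace Ω}
    {P : Measure Ω} [IsProbabilityMeasure P]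
    {A : Set Ω} (hA : MeasurableSet[mΩ] A) (hm : m ≤ mΩ)
    {H : Set Ω} (hHm : MeasurableSet[m] H) (t : ℝ) :
    cwLoss P A H t = (1 - t) * (P A).toReal
      + ∫ ω in H, (t - (P[A.indicator (fun _ => (1:ℝ))|m]) ω) ∂P := by
  set X := P[A.indicator (fun _ => (1:ℝ))|m] with hX
  have hH : MeasurableSet[mΩ] H := hm H hHm
  have hfint : Integrable (A.indicator (fun _ => (1:ℝ))) P :=
    Integrable.indicator (integrable_const (1:ℝ)) hA
  have hXH : ∫ ω in H, X ω ∂P = (P (H ∩ A)).toReal := by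
    rw [hX, setIntegral_condExp hm hfint hHm, setIntegral_indicator (μ := P) hA,
      setIntegral_const (μ := P) (1:ℝ)]
    simp [Measure.real]
  have hsub : ∫ ω in H, (t - X ω) ∂P = t * (P H).toReal - (P (H ∩ A)).toReal := by
    rw [integral_sub ((integrable_const t).integrableOn : IntegrableOn _ H P)
      (integrable_condExp.integrableOn : IntegrableOn _ H P),
      setIntegral_const (μ := P) t, hXH]
    simp [mul_comm, Measure.real]
  have e1 : (P (A ∩ H)).toReal + (P (A ∩ Hᶜ)).toReal = (P A).toReal := by
    rw [← ENNReal.toReal_add (measure_ne_top _ _) (measure_ne_top _ _), ← Set.diff_eq,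
      measure_inter_add_diff A hH]
  have e2 : (P (H ∩ A)).toReal + (P (Aᶜ ∩ H)).toReal = (P H).toReal := by
    rw [← ENNReal.toReal_add (measure_ne_top _ _) (measure_ne_top _ _), Set.inter_comm Aᶜ H,
      ← Set.diff_eq, measure_inter_add_diff H hA]
  have e3 : (P (A ∩ H)).toReal = (P (H ∩ A)).toReal := by rw [Set.inter_comm]
  simp only [cwLoss]
  rw [hsub]
  have h1 : (P (A ∩ Hᶜ)).toReal = (P A).toReal - (P (H ∩ A)).toReal := by linarith
  have h2 : (P (Aᶜ ∩ H)).toReal = (P H).toReal - (P (H ∩ A)).toReal := by linarith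
  rw [h1, h2]; ring

lemma bayesLoss_eq {Ω : Type*} {m : MeasurableSpace Ω} {mΩ : MeasurableSpace Ω}
    {P : Measure Ω} [IsProbabilityMeasure P]
    {A : Set Ω} (hA : MeasurableSet[mΩ] A) (hm : m ≤ mΩ)
    (t : ℝ) :
    bayesLoss P A m t = (1 - t) * (P A).toReal
      - ∫ ω, max ((P[A.indicator (fun _ => (1:ℝ))|m]) ω - t) 0 ∂P := by
  set X := P[A.indicator (fun _ => (1:ℝ))|m] with hX
  have hXi : Integrable X P := integrable_condExp
  have hMi : Integrable (fun ω => max (X ω - t) 0) P := (hXi.sub (integrable_const t)).pos_part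
  have hMnn : 0 ≤ᵐ[P] fun ω => max (X ω - t) 0 :=
    Filter.Eventually.of_forall fun ω => le_max_right _ _
  have hlb : ∀ (H : Set Ω), MeasurableSet[m] H →
      (1 - t) * (P A).toReal - ∫ ω, max (X ω - t) 0 ∂P ≤ cwLoss P A H t := by
    intro H hHm
    rw [cwLoss_eq hA hm hHm t, ← hX]
    have h1 : ∫ ω in H, -(max (X ω - t) 0) ∂P ≤ ∫ ω in H, (t - X ω) ∂P := by
      refine setIntegral_mono_on (hMi.neg.integrableOn : IntegrableOn _ H P)
        (((integrable_const t).sub hXi).integrableOn : IntegrableOn _ H P)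
        (hm H hHm) fun ω _ => ?_
      have := le_max_left (X ω - t) 0
      linarith
    have h2 : -∫ ω, max (X ω - t) 0 ∂P ≤ ∫ ω in H, -(max (X ω - t) 0) ∂P := by
      rw [integral_neg, neg_le_neg_iff]
      exact setIntegral_le_integral hMi hMnn
    linarith
  set H₀ : Set Ω := {ω | t < X ω} with hH₀
  have hH₀m : MeasurableSet[m] H₀ :=
    measurableSet_lt measurable_const stronglyMeasurable_condExp.measurable
  have hind : ∀ ω, max (X ω - t) 0 = H₀.indicator (fun ω => X ω - t) ω := by
    intro ω
    rw [Set.indicator_apply]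
    by_cases h : ω ∈ H₀
    · rw [if_pos h]
      have ht : t < X ω := h
      exact max_eq_left (by linarith)
    · rw [if_neg h]
      have ht : ¬ t < X ω := h
      push_neg at ht
      exact max_eq_right (by linarith)
  have hval : cwLoss P A H₀ t = (1 - t) * (P A).toReal - ∫ ω, max (X ω - t) 0 ∂P := by
    rw [cwLoss_eq hA hm hH₀m t, ← hX]
    have h3 : ∫ ω, max (X ω - t) 0 ∂P = ∫ ω in H₀, (X ω - t) ∂P := by
      rw [integral_congr_ae (Filter.Eventually.of_forall hind),
        integral_indicator (μ := P) (hm H₀ hH₀m)]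
    have h4 : ∫ ω in H₀, (t - X ω) ∂P = - ∫ ω in H₀, (X ω - t) ∂P := by
      rw [← integral_neg]
      exact integral_congr_ae (Filter.Eventually.of_forall fun ω => by ring)
    rw [h3, h4]; ring
  haveI hne : Nonempty {H : Set Ω // MeasurableSet[m] H} := ⟨⟨∅, @MeasurableSet.empty Ω m⟩⟩
  have hbdd : BddBelow (Set.range fun H : {H : Set Ω // MeasurableSet[m] H} => cwLoss P A H t) := by
    refine ⟨(1 - t) * (P A).toReal - ∫ ω, max (X ω - t) 0 ∂P, ?_⟩
    rintro x ⟨H, rfl⟩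
    exact hlb H H.2
  simp only [bayesLoss]
  refine le_antisymm ?_ (le_ciInf fun H => hlb H H.2)
  exact (ciInf_le hbdd ⟨H₀, hH₀m⟩).trans_eq hval

lemma integral_Ioo_max {x : ℝ} (hx0 : 0 ≤ x) (hx1 : x ≤ 1) :
    ∫ t in Set.Ioo (0:ℝ) 1, max (x - t) 0 = x^2/2 := by
  rw [← MeasureTheory.integral_Ioc_eq_integral_Ioo,
    ← intervalIntegral.integral_of_le (by norm_num : (0:ℝ) ≤ 1)]
  have hi : ∀ a b : ℝ, IntervalIntegrable (fun t => max (x - t) 0) volume a b :=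
    fun a b => ((continuous_const.sub continuous_id).max continuous_const).intervalIntegrable a b
  rw [← intervalIntegral.integral_add_adjacent_intervals (hi 0 x) (hi x 1)]
  have h1 : ∫ t in (0:ℝ)..x, max (x - t) 0 = ∫ t in (0:ℝ)..x, (x - t) := by
    refine intervalIntegral.integral_congr fun t ht => ?_
    rw [Set.uIcc_of_le hx0] at ht
    have h : 0 ≤ x - t := by linarith [ht.2]
    exact sup_eq_left.mpr h
  have h2 : ∫ t in x..(1:ℝ), max (x - t) 0 = 0 := by
    have hcg : ∫ t in x..(1:ℝ), max (x - t) 0 = ∫ _t in x..(1:ℝ), (0:ℝ) := by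
      refine intervalIntegral.integral_congr fun t ht => ?_
      rw [Set.uIcc_of_le hx1] at ht
      have h : x - t ≤ 0 := by linarith [ht.1]
      exact sup_eq_right.mpr h
    rw [hcg, intervalIntegral.integral_zero]
  have h3 : ∫ t in (0:ℝ)..x, (x - t) = x^2/2 := by
    rw [intervalIntegral.integral_sub (intervalIntegrable_const) intervalIntegral.intervalIntegrable_id,
      intervalIntegral.integral_const, integral_id, smul_eq_mul]
    ring
  rw [h1, h2, h3]; ring

lemma integral_Ioo_phi {Ω : Type*} {mΩ : MeasurableSpace Ω} {P : Measure Ω}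
    [IsProbabilityMeasure P] {X : Ω → ℝ} (hXm : Measurable X)
    (hX01 : ∀ᵐ ω ∂P, 0 ≤ X ω ∧ X ω ≤ 1) :
    ∫ t in Set.Ioo (0:ℝ) 1, (∫ ω, max (X ω - t) 0 ∂P) = (∫ ω, (X ω)^2 ∂P) / 2 := by
  set ν := volume.restrict (Set.Ioo (0:ℝ) 1) with hν
  haveI : IsFiniteMeasure ν := by
    constructor
    rw [hν, Measure.restrict_apply_univ, Real.volume_Ioo]
    norm_num
  have hmf : Measurable (Function.uncurry fun (t : ℝ) (ω : Ω) => max (X ω - t) 0) := by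
    have : (Function.uncurry fun (t : ℝ) (ω : Ω) => max (X ω - t) 0)
        = fun p : ℝ × Ω => max (X p.2 - p.1) 0 := rfl
    rw [this]
    exact ((hXm.comp measurable_snd).sub measurable_fst).max measurable_const
  have h1 : ∀ᵐ p ∂ν.prod P, 0 ≤ p.1 := by
    rw [ae_iff]
    have hs : {p : ℝ × Ω | ¬ 0 ≤ p.1} = {t : ℝ | ¬ 0 ≤ t} ×ˢ (Set.univ : Set Ω) := by
      ext p; simp
    rw [hs, Measure.prod_prod]
    have hν0 : ν {t : ℝ | ¬ 0 ≤ t} = 0 := by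
      rw [hν, Measure.restrict_apply' measurableSet_Ioo]
      have : {t : ℝ | ¬ 0 ≤ t} ∩ Set.Ioo 0 1 = ∅ := by
        ext t; simp only [Set.mem_inter_iff, Set.mem_setOf_eq, Set.mem_Ioo, Set.mem_empty_iff_false,
          iff_false, not_and, not_le]
        intro h1 h2; linarith
      rw [this, measure_empty]
    rw [hν0, zero_mul]
  have h2 : ∀ᵐ p ∂ν.prod P, 0 ≤ X p.2 ∧ X p.2 ≤ 1 := by
    rw [ae_iff]
    have hs : {p : ℝ × Ω | ¬ (0 ≤ X p.2 ∧ X p.2 ≤ 1)}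
        = (Set.univ : Set ℝ) ×ˢ {ω : Ω | ¬ (0 ≤ X ω ∧ X ω ≤ 1)} := by
      ext p; simp
    rw [hs, Measure.prod_prod]
    have hP0 : P {ω : Ω | ¬ (0 ≤ X ω ∧ X ω ≤ 1)} = 0 := by
      rw [← ae_iff] at *; exact hX01
    rw [hP0, mul_zero]
  have hbd : ∀ᵐ p ∂ν.prod P, ‖max (X p.2 - p.1) 0‖ ≤ 1 := by
    filter_upwards [h1, h2] with p hp1 hp2
    rw [Real.norm_eq_abs, abs_of_nonneg (le_max_right _ _)]
    exact max_le (by linarith [hp2.2]) zero_le_one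
  have hint : Integrable (Function.uncurry fun (t : ℝ) (ω : Ω) => max (X ω - t) 0) (ν.prod P) :=
    Integrable.mono' (integrable_const 1) hmf.aestronglyMeasurable hbd
  have hswap := integral_integral_swap hint
  rw [hν] at hswap
  rw [hswap]
  have hinner : ∀ᵐ ω ∂P, (∫ t in Set.Ioo (0:ℝ) 1, max (X ω - t) 0) = (X ω)^2/2 := by
    filter_upwards [hX01] with ω hω
    exact integral_Ioo_max hω.1 hω.2
  rw [integral_congr_ae hinner, integral_div]

lemma key_ab {Ω : Type*} {m₂ m : MeasurableSpace Ω} {mΩ : MeasurableSpace Ω}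
    {P : Measure Ω} [IsProbabilityMeasure P] {A : Set Ω} (hA : MeasurableSet[mΩ] A)
    (hm₂m : m₂ ≤ m) (hm : m ≤ mΩ) :
    (∀ t ∈ Set.Ioo (0:ℝ) 1, bayesLoss P A m t = bayesLoss P A m₂ t)
    ↔ P[A.indicator (fun _ => (1:ℝ))|m] =ᵐ[P] P[A.indicator (fun _ => (1:ℝ))|m₂] := by
  have hm₂ : m₂ ≤ mΩ := hm₂m.trans hm
  set f : Ω → ℝ := A.indicator (fun _ => (1:ℝ)) with hfdef
  have hfint : Integrable f P := Integrable.indicator (integrable_const (1:ℝ)) hA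
  set X := P[f|m] with hX
  set Y := P[f|m₂] with hY
  have hf0 : 0 ≤ᵐ[P] f := Filter.Eventually.of_forall fun ω =>
    Set.indicator_nonneg (fun _ _ => zero_le_one) ω
  have hf1 : f ≤ᵐ[P] fun _ => (1:ℝ) := Filter.Eventually.of_forall fun ω =>
    Set.indicator_le' (fun _ _ => le_rfl) (fun _ _ => zero_le_one) ω
  have hX01 : ∀ᵐ ω ∂P, 0 ≤ X ω ∧ X ω ≤ 1 := by
    have h0 : 0 ≤ᵐ[P] X := condExp_nonneg hf0
    have h1 : X ≤ᵐ[P] P[(fun _ => (1:ℝ))|m] := condExp_mono hfint (integrable_const 1) hf1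
    rw [condExp_const hm (1:ℝ)] at h1
    filter_upwards [h0, h1] with ω a b
    exact ⟨a, b⟩
  have hY01 : ∀ᵐ ω ∂P, 0 ≤ Y ω ∧ Y ω ≤ 1 := by
    have h0 : 0 ≤ᵐ[P] Y := condExp_nonneg hf0
    have h1 : Y ≤ᵐ[P] P[(fun _ => (1:ℝ))|m₂] := condExp_mono hfint (integrable_const 1) hf1
    rw [condExp_const hm₂ (1:ℝ)] at h1
    filter_upwards [h0, h1] with ω a b
    exact ⟨a, b⟩
  have hMX : Measurable X := (stronglyMeasurable_condExp.mono hm).measurable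
  have hMY : Measurable Y := (stronglyMeasurable_condExp.mono hm₂).measurable
  constructor
  · intro hloss
    have hΦ : ∀ t ∈ Set.Ioo (0:ℝ) 1,
        (∫ ω, max (X ω - t) 0 ∂P) = ∫ ω, max (Y ω - t) 0 ∂P := by
      intro t ht
      have h1 := bayesLoss_eq (P := P) hA hm t
      have h2 := bayesLoss_eq (P := P) hA hm₂ t
      have h3 := hloss t ht
      rw [h1, h2, ← hX, ← hY] at h3
      linarith
    have hIeq : ∫ t in Set.Ioo (0:ℝ) 1, (∫ ω, max (X ω - t) 0 ∂P)
        = ∫ t in Set.Ioo (0:ℝ) 1, (∫ ω, max (Y ω - t) 0 ∂P) :=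
      setIntegral_congr_fun measurableSet_Ioo fun t ht => hΦ t ht
    rw [integral_Ioo_phi hMX hX01, integral_Ioo_phi hMY hY01] at hIeq
    have hsq : ∫ ω, (X ω)^2 ∂P = ∫ ω, (Y ω)^2 ∂P := by linarith
    have hYsm : StronglyMeasurable[m₂] Y := stronglyMeasurable_condExp
    have hbd2 : ∀ (W Z : Ω → ℝ), Measurable W → Measurable Z →
        (∀ᵐ ω ∂P, 0 ≤ W ω ∧ W ω ≤ 1) → (∀ᵐ ω ∂P, 0 ≤ Z ω ∧ Z ω ≤ 1) →
        Integrable (W * Z) P := by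
      intro W Z hW hZ hW01 hZ01
      refine Integrable.mono' (integrable_const (1:ℝ)) ((hW.mul hZ).aestronglyMeasurable) ?_
      filter_upwards [hW01, hZ01] with ω h1 h2
      rw [Pi.mul_apply, Real.norm_eq_abs, abs_mul, abs_of_nonneg h1.1, abs_of_nonneg h2.1]
      nlinarith [h1.2, h2.2, h1.1, h2.1]
    have hYX_int : Integrable (Y * X) P := hbd2 Y X hMY hMX hY01 hX01
    have hYY_int : Integrable (Y * Y) P := hbd2 Y Y hMY hMY hY01 hY01
    have hXX_int : Integrable (X * X) P := hbd2 X X hMX hMX hX01 hX01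
    have htower : P[X|m₂] =ᵐ[P] Y := by
      rw [hX, hY]; exact condExp_condExp_of_le hm₂m hm
    have hpull : P[Y * X|m₂] =ᵐ[P] Y * P[X|m₂] :=
      condExp_mul_of_stronglyMeasurable_left hYsm hYX_int integrable_condExp
    have hEXY : ∫ ω, (Y * X) ω ∂P = ∫ ω, (Y * Y) ω ∂P := by
      rw [← integral_condExp hm₂ (f := Y * X)]
      refine integral_congr_ae (hpull.trans ?_)
      filter_upwards [htower] with ω h
      rw [Pi.mul_apply, Pi.mul_apply, h]
    have hint2 : Integrable (fun ω => (X ω - Y ω)^2) P := by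
      refine Integrable.mono' (integrable_const (1:ℝ))
        (((hMX.sub hMY).pow_const 2).aestronglyMeasurable) ?_
      filter_upwards [hX01, hY01] with ω h1 h2
      rw [Real.norm_eq_abs, abs_of_nonneg (sq_nonneg _)]
      nlinarith [h1.1, h1.2, h2.1, h2.2]
    have hzero : ∫ ω, (X ω - Y ω)^2 ∂P = 0 := by
      have hexp : (fun ω => (X ω - Y ω)^2)
          = fun ω => ((X * X) ω + (Y * Y) ω) - 2 * (Y * X) ω := by
        funext ω; simp only [Pi.mul_apply]; ring
      have hxx : ∫ ω, (X * X) ω ∂P = ∫ ω, (X ω)^2 ∂P :=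
        integral_congr_ae (Filter.Eventually.of_forall fun ω => by simp [sq])
      have hyy : ∫ ω, (Y * Y) ω ∂P = ∫ ω, (Y ω)^2 ∂P :=
        integral_congr_ae (Filter.Eventually.of_forall fun ω => by simp [sq])
      rw [hexp, integral_sub, integral_add, integral_const_mul]
      · linarith [hEXY, hxx, hyy, hsq]
      · exact hXX_int
      · exact hYY_int
      · exact hXX_int.add hYY_int
      · exact hYX_int.const_mul 2

    have hae : (fun ω => (X ω - Y ω)^2) =ᵐ[P] 0 :=
      (integral_eq_zero_iff_of_nonneg (fun ω => sq_nonneg _) hint2).mp hzero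
    filter_upwards [hae] with ω h
    have h2 : (X ω - Y ω)^2 = 0 := h
    have h3 : X ω - Y ω = 0 := by
      exact pow_eq_zero_iff (two_ne_zero) |>.mp h2
    linarith
  · intro hXYeq t ht
    rw [bayesLoss_eq (P := P) hA hm t, bayesLoss_eq (P := P) hA hm₂ t, ← hX, ← hY]
    have h : ∫ ω, max (X ω - t) 0 ∂P = ∫ ω, max (Y ω - t) 0 ∂P :=
      integral_congr_ae (by filter_upwards [hXYeq] with ω h; rw [h])
    rw [h]

lemma key_bc {Ω ΩT : Type*} {mT : MeasurableSpace ΩT} {T : Ω → ΩT}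
    {m : MeasurableSpace Ω} {mΩ : MeasurableSpace Ω}
    {P : Measure Ω} [IsProbabilityMeasure P] {A : Set Ω} (hA : MeasurableSet[mΩ] A)
    (hm₂m : MeasurableSpace.comap T mT ≤ m) (hm : m ≤ mΩ) :
    (P[A.indicator (fun _ => (1 : ℝ)) | m]
        =ᵐ[P] P[A.indicator (fun _ => (1 : ℝ)) | MeasurableSpace.comap T mT])
    ↔ ∃ G : ΩT → ℝ, Measurable G ∧
        P[A.indicator (fun _ => (1 : ℝ)) | m] =ᵐ[P] fun ω => G (T ω) := by
  have hm₂ : MeasurableSpace.comap T mT ≤ mΩ := hm₂m.trans hm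
  have hfint : Integrable (A.indicator (fun _ => (1:ℝ))) P :=
    Integrable.indicator (integrable_const (1:ℝ)) hA
  constructor
  · intro hXY
    obtain ⟨G, hGm, hGe⟩ := doob_dynkin
      (stronglyMeasurable_condExp :
        StronglyMeasurable[MeasurableSpace.comap T mT]
          (P[A.indicator (fun _ => (1:ℝ))|MeasurableSpace.comap T mT]))
    exact ⟨G, hGm, hXY.trans (Filter.Eventually.of_forall fun ω => hGe ω)⟩
  · rintro ⟨G, hGm, hXG⟩
    have hTm2 : @Measurable Ω ΩT (MeasurableSpace.comap T mT) mT T := fun s hs => ⟨s, hs, rfl⟩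
    have hGT : StronglyMeasurable[MeasurableSpace.comap T mT] (fun ω => G (T ω)) :=
      (hGm.comp hTm2).stronglyMeasurable
    exact ae_eq_condExp_of_forall_setIntegral_eq hm₂ hfint
      (fun s _ _ => integrable_condExp.integrableOn)
      (fun s hs _ => setIntegral_condExp hm hfint (hm₂m s hs))
      ⟨fun ω => G (T ω), hGT, hXG⟩

/-- **Corollary 1 (admissibility)**: for a measurable mapping `T : (Ω, ℋ) → (Ω_T, 𝒜_T)`, the
following are equivalent: (a) the cost-weighted Bayes losses of `ℋ` and `σ(T)` agree on
`(0, 1)`; (b) `T` is sufficient for `ℋ` with respect to `A`; (c) `P[A | ℋ] = G ∘ T` a.s. for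
some measurable `G : Ω_T → ℝ`. -/
theorem admissibility_characterisation
    {Ω : Type*} {mΩ : MeasurableSpace Ω} {P : Measure Ω} [IsProbabilityMeasure P]
    {A : Set Ω} (hA : MeasurableSet A) (hA0 : 0 < P A) (hA1 : P A < 1)
    {mH : MeasurableSpace Ω} (hH : mH ≤ mΩ) (hAH : ¬ MeasurableSet[mH] A)
    {ΩT : Type*} {mT : MeasurableSpace ΩT} {T : Ω → ΩT}
    (hT : @Measurable Ω ΩT mH mT T) :
    ((∀ t ∈ Set.Ioo (0 : ℝ) 1,
        bayesLoss P A mH t = bayesLoss P A (MeasurableSpace.comap T mT) t)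
      ↔ P[A.indicator (fun _ => (1 : ℝ)) | mH]
          =ᵐ[P] P[A.indicator (fun _ => (1 : ℝ)) | MeasurableSpace.comap T mT])
    ∧ ((P[A.indicator (fun _ => (1 : ℝ)) | mH]
          =ᵐ[P] P[A.indicator (fun _ => (1 : ℝ)) | MeasurableSpace.comap T mT])
      ↔ ∃ G : ΩT → ℝ, Measurable G ∧
          P[A.indicator (fun _ => (1 : ℝ)) | mH] =ᵐ[P] fun ω => G (T ω)) := by
  have hm₂m : MeasurableSpace.comap T mT ≤ mH := hT.comap_le
  exact ⟨key_ab hA hm₂m hH, key_bc hA hm₂m hH⟩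
end

section
/- Let T be an ℋ-measurable real-valued random variable and fix a version Ψ of P[A | ℋ]. Assume T and Ψ are strongly comonotonic, i.e. for all ω₁, ω₂ ∈ Ω one has T(ω₁) < T(ω₂) if and only if Ψ(ω₁) < Ψ(ω₂). Then T is sufficient for ℋ with respect to A, i.e. P[A | ℋ] = P[A | σ(T)] almost surely. -/
open MeasureTheory

/-- **Proposition 3 (comonotonicity criterion for sufficiency)**: if an `ℋ`-measurable
real-valued `T` is strongly comonotonic with a version `Ψ` of the posterior probability
`P[A | ℋ]`, then `T` is sufficient for `ℋ` with respect to `A`, i.e.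
`P[A | ℋ] = P[A | σ(T)]` almost surely. -/
theorem comonotone_implies_sufficient
    {Ω : Type*} {mΩ : MeasurableSpace Ω} {P : Measure Ω} [IsProbabilityMeasure P]
    {A : Set Ω} (hA : MeasurableSet A) (hA0 : 0 < P A) (hA1 : P A < 1)
    {mH : MeasurableSpace Ω} (hH : mH ≤ mΩ) (hAH : ¬ MeasurableSet[mH] A)
    {T : Ω → ℝ} (hT : Measurable[mH] T)
    {Ψ : Ω → ℝ} (hΨ : Ψ =ᵐ[P] P[A.indicator (fun _ => (1 : ℝ)) | mH])
    (hcomon : ∀ ω₁ ω₂ : Ω, T ω₁ < T ω₂ ↔ Ψ ω₁ < Ψ ω₂) :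
    P[A.indicator (fun _ => (1 : ℝ)) | mH]
      =ᵐ[P] P[A.indicator (fun _ => (1 : ℝ)) | MeasurableSpace.comap T Real.measurableSpace] := by
  set f := A.indicator (fun _ => (1 : ℝ)) with hfdef
  set m' := MeasurableSpace.comap T Real.measurableSpace with hm'def
  have hm'H : m' ≤ mH := hT.comap_le
  have hm' : m' ≤ mΩ := hm'H.trans hH
  -- comonotonicity in ≤ form
  have hmono : ∀ ω₁ ω₂ : Ω, T ω₁ ≤ T ω₂ → Ψ ω₁ ≤ Ψ ω₂ := by
    intro ω₁ ω₂ h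
    by_contra hlt
    exact absurd ((hcomon ω₂ ω₁).mpr (lt_of_not_ge hlt)) (not_lt_of_ge h)
  -- Ψ is measurable w.r.t. σ(T)
  have hΨm : Measurable[m'] Ψ := by
    refine measurable_of_Iio fun c => ?_
    rw [hm'def, MeasurableSpace.measurableSet_comap]
    set S := Ψ ⁻¹' Set.Iio c with hSdef
    rcases Set.eq_empty_or_nonempty S with hS | hS
    · exact ⟨∅, MeasurableSet.empty, by simp [hS]⟩
    by_cases hbd : BddAbove (T '' S)
    · set s := sSup (T '' S) with hsdef
      by_cases hatt : ∃ ω₀ ∈ S, T ω₀ = s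
      · obtain ⟨ω₀, hω₀S, hω₀⟩ := hatt
        refine ⟨Set.Iic s, measurableSet_Iic, ?_⟩
        ext ω
        simp only [Set.mem_preimage, Set.mem_Iic, hSdef, Set.mem_setOf_eq, Set.mem_Iio]
        constructor
        · intro h
          exact lt_of_le_of_lt (hmono ω ω₀ (h.trans_eq hω₀.symm)) hω₀S
        · intro h
          exact le_csSup hbd ⟨ω, h, rfl⟩
      · refine ⟨Set.Iio s, measurableSet_Iio, ?_⟩
        ext ω
        simp only [Set.mem_preimage, Set.mem_Iio, hSdef, Set.mem_setOf_eq]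
        constructor
        · intro h
          obtain ⟨t, ⟨ω', hω'S, rfl⟩, hlt⟩ := exists_lt_of_lt_csSup (hS.image T) h
          exact lt_trans ((hcomon ω ω').mp hlt) hω'S
        · intro h
          refine lt_of_le_of_ne (le_csSup hbd ⟨ω, h, rfl⟩) ?_
          intro heq
          exact hatt ⟨ω, h, heq⟩
    · refine ⟨Set.univ, MeasurableSet.univ, ?_⟩
      ext ω
      simp only [Set.preimage_univ, Set.mem_univ, true_iff, hSdef, Set.mem_setOf_eq]
      obtain ⟨t, ⟨ω', hω'S, rfl⟩, hlt⟩ := not_bddAbove_iff.mp hbd (T ω)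
      exact lt_trans ((hcomon ω ω').mp hlt) hω'S
  have hΨint : Integrable Ψ P := integrable_condExp.congr hΨ.symm
  have h1 : P[f | m'] =ᵐ[P] Ψ := by
    calc P[f | m'] =ᵐ[P] P[P[f | mH] | m'] := (condExp_condExp_of_le hm'H hH).symm
      _ =ᵐ[P] P[Ψ | m'] := condExp_congr_ae hΨ.symm
      _ = Ψ := condExp_of_stronglyMeasurable hm' hΨm.stronglyMeasurable hΨint
  exact hΨ.symm.trans h1.symm
end

section
/- Let 𝒢 be another sub-σ-field of 𝒜 (not necessarily contained in ℋ) and assume that P[A | ℋ] = E[ P[A | 𝒢] | ℋ ] almost surely. Then for all t ∈ (0,1) the cost-weighted Bayes losses satisfy L*_𝒢(t) ≤ L*_ℋ(t). -/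
open MeasureTheory

lemma aux_setInt_indicator {Ω : Type*} {mΩ : MeasurableSpace Ω} (P : Measure Ω)
    {A : Set Ω} (hA : MeasurableSet A) (S : Set Ω) :
    ∫ x in S, A.indicator (fun _ => (1 : ℝ)) x ∂P = (P (A ∩ S)).toReal := by
  rw [integral_indicator hA, setIntegral_const, smul_eq_mul, mul_one,
    measureReal_def, Measure.restrict_apply hA]

lemma aux_cw_eq {Ω : Type*} {mΩ : MeasurableSpace Ω} (P : Measure Ω) [IsFiniteMeasure P]
    {A S : Set Ω} (hA : MeasurableSet A) (hS : MeasurableSet S) (t : ℝ) :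
    cwLoss P A S t = (1 - t) * (P A).toReal
      + (t * (P S).toReal - ∫ x in S, A.indicator (fun _ => (1 : ℝ)) x ∂P) := by
  rw [aux_setInt_indicator P hA S]
  have h1 : P (A ∩ S) + P (A \ S) = P A := measure_inter_add_diff A hS
  have h2 : P (S ∩ A) + P (S \ A) = P S := measure_inter_add_diff S hA
  have e1 : (P (A ∩ S)).toReal + (P (A \ S)).toReal = (P A).toReal := by
    rw [← ENNReal.toReal_add (measure_ne_top P _) (measure_ne_top P _), h1]
  have e2 : (P (A ∩ S)).toReal + (P (S \ A)).toReal = (P S).toReal := by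
    rw [← ENNReal.toReal_add (measure_ne_top P _) (measure_ne_top P _), Set.inter_comm, h2]
  have d1 : A ∩ Sᶜ = A \ S := (Set.diff_eq A S).symm
  have d2 : Aᶜ ∩ S = S \ A := by rw [Set.inter_comm]; exact (Set.diff_eq S A).symm
  have ex : (P (A \ S)).toReal = (P A).toReal - (P (A ∩ S)).toReal := by linarith
  have ey : (P (S \ A)).toReal = (P S).toReal - (P (A ∩ S)).toReal := by linarith
  unfold cwLoss
  rw [d1, d2, ex, ey]
  ring

lemma aux_int_indicator {Ω : Type*} {mΩ : MeasurableSpace Ω} (P : Measure Ω)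
    [IsFiniteMeasure P] {A : Set Ω} (hA : MeasurableSet A) :
    Integrable (A.indicator (fun _ => (1 : ℝ))) P :=
  (integrable_const (1 : ℝ)).indicator hA

lemma aux_congr {Ω : Type*} {mΩ : MeasurableSpace Ω} (P : Measure Ω) {S : Set Ω}
    (hS : MeasurableSet S) {u v : Ω → ℝ} (h : u =ᵐ[P] v) :
    ∫ x in S, u x ∂P = ∫ x in S, v x ∂P :=
  setIntegral_congr_ae hS (h.mono fun _ hx _ => hx)

lemma aux_phimin {Ω : Type*} {mΩ : MeasurableSpace Ω} (P : Measure Ω) [IsFiniteMeasure P]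
    {g : Ω → ℝ} (hgm : Measurable g) (hgi : Integrable g P) (t : ℝ)
    {H : Set Ω} (hH : MeasurableSet H) :
    t * (P {ω | t < g ω}).toReal - ∫ x in {ω | t < g ω}, g x ∂P
      ≤ t * (P H).toReal - ∫ x in H, g x ∂P := by
  set φ : Ω → ℝ := fun ω => t - g ω with hφ_def
  have hφ_int : Integrable φ P := (integrable_const t).sub hgi
  set G : Set Ω := {ω | t < g ω} with hG_def
  have hGΩ : MeasurableSet G := hgm measurableSet_Ioi
  have φ_eq : ∀ S : Set Ω, ∫ x in S, φ x ∂P = t * (P S).toReal - ∫ x in S, g x ∂P := by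
    intro S
    rw [hφ_def, integral_sub (integrableOn_const (measure_lt_top P S).ne : IntegrableOn (fun _ => t) S P)
      hgi.integrableOn, setIntegral_const, smul_eq_mul, measureReal_def, mul_comm]
  rw [← φ_eq G, ← φ_eq H]
  have hd1 : ∫ x in G ∩ H, φ x ∂P + ∫ x in G \ H, φ x ∂P = ∫ x in G, φ x ∂P :=
    integral_inter_add_diff hH hφ_int.integrableOn
  have hd2 : ∫ x in H ∩ G, φ x ∂P + ∫ x in H \ G, φ x ∂P = ∫ x in H, φ x ∂P :=
    integral_inter_add_diff hGΩ hφ_int.integrableOn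
  have hn1 : ∫ x in G \ H, φ x ∂P ≤ 0 := by
    apply setIntegral_nonpos (hGΩ.diff hH)
    intro x hx
    have : t < g x := hx.1
    simp only [hφ_def]; linarith
  have hn2 : 0 ≤ ∫ x in H \ G, φ x ∂P := by
    apply setIntegral_nonneg (hH.diff hGΩ)
    intro x hx
    have : ¬ t < g x := hx.2
    simp only [hφ_def]; linarith
  have hcomm : G ∩ H = H ∩ G := Set.inter_comm G H
  rw [← hd1, ← hd2, hcomm]
  linarith

/-- **Proposition 5 (Brocker-type sufficiency implies dominance of Bayes losses)**: if
`P[A | ℋ] = E[P[A | 𝒢] | ℋ]` a.s. for another sub-σ-field `𝒢` of `𝒜`, then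
`L*_𝒢(t) ≤ L*_ℋ(t)` for all `t ∈ (0, 1)`. -/
theorem tower_sufficiency_implies_bayes_loss_dominance
    {Ω : Type*} {mΩ : MeasurableSpace Ω} {P : Measure Ω} [IsProbabilityMeasure P]
    {A : Set Ω} (hA : MeasurableSet A) (hA0 : 0 < P A) (hA1 : P A < 1)
    {mH : MeasurableSpace Ω} (hH : mH ≤ mΩ) (hAH : ¬ MeasurableSet[mH] A)
    {mG : MeasurableSpace Ω} (hG : mG ≤ mΩ)
    (hsuff : P[A.indicator (fun _ => (1 : ℝ)) | mH]
      =ᵐ[P] P[P[A.indicator (fun _ => (1 : ℝ)) | mG] | mH]) :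
    ∀ t ∈ Set.Ioo (0 : ℝ) 1, bayesLoss P A mG t ≤ bayesLoss P A mH t := by
  intro t ht
  obtain ⟨ht0, ht1⟩ := ht
  set f : Ω → ℝ := A.indicator (fun _ => 1) with hf_def
  have hf_int : Integrable f P := aux_int_indicator P hA
  set g : Ω → ℝ := P[f | mG] with hg_def
  have hg_int : Integrable g P := integrable_condExp
  have hg_measG : Measurable[mG] g := stronglyMeasurable_condExp.measurable
  have hg_meas : Measurable[mΩ] g := hg_measG.mono hG le_rfl
  set G : Set Ω := {ω | t < g ω} with hG_def
  have hGmG : MeasurableSet[mG] G := hg_measG measurableSet_Ioi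
  have hGΩ : MeasurableSet[mΩ] G := hG _ hGmG
  -- set-integrals of f and g agree on mH-sets and on G
  have condH : ∀ H : Set Ω, MeasurableSet[mH] H → ∫ x in H, f x ∂P = ∫ x in H, g x ∂P := by
    intro H hHm
    have h1 := setIntegral_condExp hH hf_int hHm
    have h2 := setIntegral_condExp hH hg_int hHm
    have h3 : ∫ x in H, (P[f|mH]) x ∂P = ∫ x in H, (P[g|mH]) x ∂P :=
      aux_congr P (hH H hHm) hsuff
    rw [← h1, h3, h2]
  have condG : ∫ x in G, f x ∂P = ∫ x in G, g x ∂P :=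
    (setIntegral_condExp hG hf_int hGmG).symm
  -- cwLoss at G is ≤ cwLoss at any mH-set
  have main : ∀ H : Set Ω, MeasurableSet[mH] H → cwLoss P A G t ≤ cwLoss P A H t := by
    intro H hHm
    have hHΩ : MeasurableSet[mΩ] H := hH H hHm
    rw [aux_cw_eq P hA hGΩ t, aux_cw_eq P hA hHΩ t, ← hf_def, condG, condH H hHm]
    have h := aux_phimin P hg_meas hg_int t hHΩ
    rw [← hG_def] at h
    linarith
  -- conclude via infimum
  have bdd : BddBelow (Set.range fun S : {S : Set Ω // MeasurableSet[mG] S} =>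
      cwLoss P A (S : Set Ω) t) := by
    refine ⟨0, ?_⟩
    rintro x ⟨S, rfl⟩
    unfold cwLoss
    have h1 : (0:ℝ) ≤ 1 - t := by linarith
    positivity
  unfold bayesLoss
  apply le_ciInf
  intro H
  calc (⨅ S : {S : Set Ω // MeasurableSet[mG] S}, cwLoss P A (S : Set Ω) t)
      ≤ cwLoss P A G t := ciInf_le bdd ⟨G, hGmG⟩
    _ ≤ cwLoss P A (H : Set Ω) t := main H H.2
end

section
/- Let 𝒢 be another sub-σ-field of 𝒜 such that ℋ and 𝒢 are conditionally independent given A and conditionally independent given Aᶜ (i.e. P[H ∩ G | A] = P[H | A] P[G | A] and P[H ∩ G | Aᶜ] = P[H | Aᶜ] P[G | Aᶜ] for all H ∈ ℋ, G ∈ 𝒢). Assume L*_𝒢(t) > 0 for some t ∈ (0,1). If P[A | ℋ] = E[ P[A | 𝒢] | ℋ ] almost surely, then A and ℋ are independent, i.e. P[A ∩ H] = P[A] P[H] for all H ∈ ℋ (hence P[A | ℋ] = P[A] almost surely). -/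
open MeasureTheory

/-- If two measures agree on all `mG`-measurable sets, integrals of `mG`-strongly measurable
functions agree. -/
lemma integral_eq_of_agree {Ω : Type*} {mΩ : MeasurableSpace Ω} {μ ν : Measure Ω}
    {mG : MeasurableSpace Ω} (hG : mG ≤ mΩ) {f : Ω → ℝ} (hf : StronglyMeasurable[mG] f)
    (h : ∀ s, MeasurableSet[mG] s → μ s = ν s) : ∫ x, f x ∂μ = ∫ x, f x ∂ν := by
  have htrim : μ.trim hG = ν.trim hG := by
    refine Measure.ext fun s hs => ?_
    rw [trim_measurableSet_eq hG hs, trim_measurableSet_eq hG hs, h s hs]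
  rw [integral_trim hG hf, integral_trim hG hf, htrim]

/-- **Lemma 1**: if `ℋ` and `𝒢` are conditionally independent given `A` and given `Aᶜ`
(expressed by cross-multiplied identities to avoid division), `L*_𝒢(t) > 0` for some
`t ∈ (0, 1)` and `P[A | ℋ] = E[P[A | 𝒢] | ℋ]` a.s., then `A` and `ℋ` are independent. -/
theorem cond_indep_tower_implies_independent
    {Ω : Type*} {mΩ : MeasurableSpace Ω} {P : Measure Ω} [IsProbabilityMeasure P]
    {A : Set Ω} (hA : MeasurableSet A) (hA0 : 0 < P A) (hA1 : P A < 1)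
    {mH : MeasurableSpace Ω} (hH : mH ≤ mΩ) (hAH : ¬ MeasurableSet[mH] A)
    {mG : MeasurableSpace Ω} (hG : mG ≤ mΩ)
    (hciA : ∀ H G : Set Ω, MeasurableSet[mH] H → MeasurableSet[mG] G →
      P (H ∩ G ∩ A) * P A = P (H ∩ A) * P (G ∩ A))
    (hciAc : ∀ H G : Set Ω, MeasurableSet[mH] H → MeasurableSet[mG] G →
      P (H ∩ G ∩ Aᶜ) * P Aᶜ = P (H ∩ Aᶜ) * P (G ∩ Aᶜ))
    (hpos : ∃ t ∈ Set.Ioo (0 : ℝ) 1, 0 < bayesLoss P A mG t)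
    (hsuff : P[A.indicator (fun _ => (1 : ℝ)) | mH]
      =ᵐ[P] P[P[A.indicator (fun _ => (1 : ℝ)) | mG] | mH]) :
    ∀ H : Set Ω, MeasurableSet[mH] H → P (A ∩ H) = P A * P H := by
  intro H hHm
  letI : MeasurableSpace Ω := mΩ
  have hHmeas : MeasurableSet[mΩ] H := hH H hHm
  set ind := A.indicator (fun _ => (1 : ℝ)) with hind_def
  have hind_int : Integrable ind P := (integrable_const (μ := P) (1 : ℝ)).indicator hA
  set f := P[ind | mG] with hf_def
  have hf_int : Integrable f P := integrable_condExp
  have hf_sm : StronglyMeasurable[mG] f := stronglyMeasurable_condExp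
  set p := (P A).toReal with hp_def
  -- total integral of f
  have hint_f : ∫ x, f x ∂P = p := by
    rw [hf_def, integral_condExp hG, hind_def, integral_indicator_const (μ := P) (1 : ℝ) hA]
    simp [hp_def, measureReal_def]
  set q := ∫ x in A, f x ∂P with hq_def
  -- key conditional-independence consequence
  have key : ∀ S : Set Ω, MeasurableSet[mΩ] S →
      (∀ G : Set Ω, MeasurableSet[mG] G → P (H ∩ G ∩ S) * P S = P (H ∩ S) * P (G ∩ S)) →
      (P S).toReal * ∫ x in H ∩ S, f x ∂P = (P (H ∩ S)).toReal * ∫ x in S, f x ∂P := by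
    intro S hS hci
    have hagree : ∀ s, MeasurableSet[mG] s →
        (P S • P.restrict (H ∩ S)) s = (P (H ∩ S) • P.restrict S) s := by
      intro s hs
      have hsm : MeasurableSet[mΩ] s := hG s hs
      rw [Measure.smul_apply, Measure.smul_apply, Measure.restrict_apply hsm,
        Measure.restrict_apply hsm, smul_eq_mul, smul_eq_mul]
      have hset : s ∩ (H ∩ S) = H ∩ s ∩ S := by ext x; simp only [Set.mem_inter_iff]; tauto
      rw [hset, mul_comm (P S) _]
      exact hci s hs
    have h := integral_eq_of_agree hG hf_sm hagree
    rw [integral_smul_measure, integral_smul_measure] at h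
    simpa [smul_eq_mul] using h
  have h1 := key A hA (fun G hGm => hciA H G hHm hGm)
  have h2 := key Aᶜ hA.compl (fun G hGm => hciAc H G hHm hGm)
  -- splitting set integrals along A
  have hsplit : ∫ x in H, f x ∂P = (∫ x in H ∩ A, f x ∂P) + ∫ x in H ∩ Aᶜ, f x ∂P := by
    have h := integral_add_compl hA (hf_int.restrict (s := H))
    rw [Measure.restrict_restrict hA, Measure.restrict_restrict hA.compl,
      Set.inter_comm A H, Set.inter_comm Aᶜ H] at h
    exact h.symm
  -- total split: ∫_{Aᶜ} f = p - q
  have hqc : ∫ x in Aᶜ, f x ∂P = p - q := by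
    have h := integral_add_compl hA hf_int
    rw [hint_f] at h
    linarith [h]
  -- `∫_H f = P(A ∩ H)`
  have hHf : ∫ x in H, f x ∂P = (P (A ∩ H)).toReal := by
    have e1 : ∫ x in H, ind x ∂P = (P (A ∩ H)).toReal := by
      rw [hind_def, setIntegral_indicator hA]
      simp [Set.inter_comm H A, measureReal_def]
    have e2 : ∫ x in H, (P[f | mH]) x ∂P = ∫ x in H, f x ∂P :=
      setIntegral_condExp hH hf_int hHm
    have e3 : ∫ x in H, (P[ind | mH]) x ∂P = ∫ x in H, ind x ∂P :=
      setIntegral_condExp hH hind_int hHm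
    have e4 : ∫ x in H, (P[ind | mH]) x ∂P = ∫ x in H, (P[f | mH]) x ∂P :=
      setIntegral_congr_ae hHmeas (hsuff.mono fun x hx _ => hx)
    rw [← e2, ← e4, e3, e1]
  -- real arithmetic set-up
  set m := (P (A ∩ H)).toReal with hm_def
  set hR := (P H).toReal with hR_def
  have hfin : ∀ s : Set Ω, P s ≠ ⊤ := fun s => measure_ne_top P s
  have hHA : (P (H ∩ A)).toReal = m := by rw [Set.inter_comm H A]
  have hHAc : (P (H ∩ Aᶜ)).toReal = hR - m := by
    have h := measure_inter_add_diff (μ := P) H hA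
    rw [Set.diff_eq] at h
    have h' : (P (H ∩ A)).toReal + (P (H ∩ Aᶜ)).toReal = hR := by
      rw [← ENNReal.toReal_add (hfin _) (hfin _), h]
    rw [Set.inter_comm H A] at h'
    linarith
  have hpc : (P Aᶜ).toReal = 1 - p := by
    rw [measure_compl hA (hfin A), measure_univ,
      ENNReal.toReal_sub_of_le hA1.le (by simp)]
    simp [hp_def]
  have hp0 : 0 < p := ENNReal.toReal_pos hA0.ne' (hfin A)
  have hp1 : p < 1 := by
    rw [hp_def, ← ENNReal.toReal_one]
    exact ENNReal.toReal_strict_mono (by simp) hA1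
  -- case on whether q = p
  by_cases hpq : q = p
  · -- degenerate case: contradiction with positive Bayes loss
    exfalso
    obtain ⟨t, ht, hbl⟩ := hpos
    -- 0 ≤ f ≤ 1 a.e.
    have hf0 : 0 ≤ᵐ[P] f :=
      condExp_nonneg (Filter.Eventually.of_forall fun x =>
        Set.indicator_nonneg (fun _ _ => zero_le_one) x)
    have hf1 : f ≤ᵐ[P] fun _ => (1 : ℝ) := by
      have h := condExp_mono (m := mG) (μ := P) hind_int (integrable_const (1 : ℝ))
        (Filter.Eventually.of_forall fun x => by
          by_cases hx : x ∈ A <;>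
            simp [hind_def, Set.indicator_of_mem, Set.indicator_of_notMem, hx])
      calc f ≤ᵐ[P] P[(fun _ => (1 : ℝ)) | mG] := h
      _ =ᵐ[P] fun _ => (1 : ℝ) := Filter.EventuallyEq.of_eq (condExp_const hG (1 : ℝ))
    -- f = 1 a.e. on A
    have hfA : ∀ᵐ x ∂P, x ∈ A → f x = 1 := by
      have hint : Integrable (fun x => 1 - f x) (P.restrict A) :=
        ((integrable_const (1 : ℝ)).sub hf_int).restrict
      have hnn : 0 ≤ᵐ[P.restrict A] fun x => 1 - f x :=
        ae_restrict_of_ae (hf1.mono fun x hx => by simpa using hx)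
      have hzero : ∫ x in A, (1 - f x) ∂P = 0 := by
        rw [integral_sub (integrable_const _).restrict hf_int.restrict]
        simp [← hq_def, hpq, hp_def, measureReal_def]
      have h := (integral_eq_zero_iff_of_nonneg_ae hnn hint).mp hzero
      have h' := (ae_restrict_iff' hA).mp h
      exact h'.mono fun x hx hxA => by have := hx hxA; simp at this; linarith
    -- f = 0 a.e. on Aᶜ
    have hfAc : ∀ᵐ x ∂P, x ∈ Aᶜ → f x = 0 := by
      have hnn : 0 ≤ᵐ[P.restrict Aᶜ] f := ae_restrict_of_ae hf0
      have hzero : ∫ x in Aᶜ, f x ∂P = 0 := by rw [hqc, hpq]; ring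
      have h := (integral_eq_zero_iff_of_nonneg_ae hnn hf_int.restrict).mp hzero
      exact (ae_restrict_iff' hA.compl).mp h
    -- the set F = {f ≥ 1/2} achieves zero loss
    set F : Set Ω := f ⁻¹' Set.Ici (1/2 : ℝ) with hF_def
    have hF : MeasurableSet[mG] F := hf_sm.measurable measurableSet_Ici
    have hAFc : P (A ∩ Fᶜ) = 0 := by
      rw [measure_eq_zero_iff_ae_notMem]
      refine hfA.mono fun x hx hmem => ?_
      have h1 := hx hmem.1
      have h2 : ¬ (1/2 : ℝ) ≤ f x := hmem.2
      rw [h1] at h2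
      norm_num at h2
    have hAcF : P (Aᶜ ∩ F) = 0 := by
      rw [measure_eq_zero_iff_ae_notMem]
      refine hfAc.mono fun x hx hmem => ?_
      have h1 := hx hmem.1
      have h2 : (1/2 : ℝ) ≤ f x := hmem.2
      rw [h1] at h2
      norm_num at h2
    have hloss : cwLoss P A F t = 0 := by
      unfold cwLoss
      rw [hAFc, hAcF]
      simp
    have hbdd : BddBelow (Set.range fun Hs : {H : Set Ω // MeasurableSet[mG] H} =>
        cwLoss P A Hs t) := by
      refine ⟨0, ?_⟩
      rintro x ⟨Hs, rfl⟩
      have h1t : (0 : ℝ) ≤ 1 - t := by linarith [ht.2]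
      have h0t : (0 : ℝ) ≤ t := le_of_lt ht.1
      exact add_nonneg (mul_nonneg h1t ENNReal.toReal_nonneg)
        (mul_nonneg h0t ENNReal.toReal_nonneg)
    have hle : bayesLoss P A mG t ≤ 0 := by
      rw [← hloss]
      exact ciInf_le hbdd ⟨F, hF⟩
    linarith
  · -- nondegenerate case
    have e1 : p * ∫ x in H ∩ A, f x ∂P = m * q := by rw [h1, hHA]
    have e2 : (1 - p) * ∫ x in H ∩ Aᶜ, f x ∂P = (hR - m) * (p - q) := by
      rw [← hpc, h2, hHAc, hqc]
    have e3 : m = (∫ x in H ∩ A, f x ∂P) + ∫ x in H ∩ Aᶜ, f x ∂P := by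
      rw [← hsplit, hHf]
    have hkey : m * (p - q) = p * hR * (p - q) := by
      linear_combination (1 - p) * e1 + p * e2 + p * (1 - p) * e3
    have hne : p - q ≠ 0 := sub_ne_zero.mpr (fun h => hpq h.symm)
    have hm : m = p * hR := mul_right_cancel₀ hne hkey
    have hfinal : (P (A ∩ H)).toReal = (P A * P H).toReal := by
      rw [ENNReal.toReal_mul]; exact hm
    exact (ENNReal.toReal_eq_toReal_iff' (hfin _) (ENNReal.mul_ne_top (hfin _) (hfin _))).mp hfinal
end

section
/- Let Ψ = P[A | ℋ]. Then twice the area under the cost-weighted Bayes loss curve equals the refinement loss: 2 ∫₀¹ L*_ℋ(t) dt = E[Ψ(1−Ψ)]. -/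
open MeasureTheory

open intervalIntegral in

lemma aux_inner (ψ : ℝ) (h0 : 0 ≤ ψ) (h1 : ψ ≤ 1) :
    ∫ t in Set.Ioc (0:ℝ) 1, min ((1 - t) * ψ) (t * (1 - ψ)) = ψ * (1 - ψ) / 2 := by
  have hc : Continuous fun t : ℝ => min ((1 - t) * ψ) (t * (1 - ψ)) := by
    continuity
  rw [← intervalIntegral.integral_of_le (by norm_num : (0:ℝ) ≤ 1)]
  have hsplit : ∫ t in (0:ℝ)..1, min ((1 - t) * ψ) (t * (1 - ψ))
      = (∫ t in (0:ℝ)..ψ, min ((1 - t) * ψ) (t * (1 - ψ)))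
        + ∫ t in ψ..1, min ((1 - t) * ψ) (t * (1 - ψ)) := by
    rw [intervalIntegral.integral_add_adjacent_intervals] <;>
      exact hc.intervalIntegrable _ _
  have h1' : (∫ t in (0:ℝ)..ψ, min ((1 - t) * ψ) (t * (1 - ψ)))
      = ∫ t in (0:ℝ)..ψ, t * (1 - ψ) := by
    apply intervalIntegral.integral_congr
    intro t ht
    rw [Set.uIcc_of_le h0] at ht
    exact min_eq_right (by nlinarith [ht.1, ht.2])
  have h2' : (∫ t in ψ..1, min ((1 - t) * ψ) (t * (1 - ψ)))
      = ∫ t in ψ..1, (1 - t) * ψ := by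
    apply intervalIntegral.integral_congr
    intro t ht
    rw [Set.uIcc_of_le h1] at ht
    exact min_eq_left (by nlinarith [ht.1, ht.2])
  have e1 : (∫ t in (0:ℝ)..ψ, t * (1 - ψ)) = ψ^2 * (1 - ψ) / 2 := by
    simp [intervalIntegral.integral_mul_const, integral_id]
    ring
  have e2 : (∫ t in ψ..1, (1 - t) * ψ) = (1 - ψ)^2 * ψ / 2 := by
    have : (∫ t in ψ..1, (1 - t) * ψ) = (∫ t in ψ..1, (1 - t)) * ψ := by
      rw [← intervalIntegral.integral_mul_const]
    rw [this]
    have : (∫ t in ψ..1, (1 - t)) = (1-ψ) - (1^2/2 - ψ^2/2) := by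
      rw [intervalIntegral.integral_sub (intervalIntegrable_const) (intervalIntegral.intervalIntegrable_id)]
      simp [integral_id]
      ring
    rw [this]; ring
  rw [hsplit, h1', h2', e1, e2]; ring

lemma aux_bayes {Ω : Type*} {mH : MeasurableSpace Ω} {mΩ : MeasurableSpace Ω}
    {P : Measure Ω} [IsProbabilityMeasure P]
    {A : Set Ω} (hA : MeasurableSet A) (hH : mH ≤ mΩ)
    {t : ℝ} (ht0 : 0 ≤ t) (ht1 : t ≤ 1) :
    bayesLoss P A mH t
      = ∫ ω, min ((1 - t) * (P[A.indicator (fun _ => (1:ℝ)) | mH]) ω)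
            (t * (1 - (P[A.indicator (fun _ => (1:ℝ)) | mH]) ω)) ∂P := by
  set Ψ := P[A.indicator (fun _ => (1:ℝ)) | mH] with hΨdef
  have hInd : Integrable (A.indicator fun _ => (1:ℝ)) P := (integrable_const 1).indicator hA
  have hΨint : Integrable Ψ P := integrable_condExp
  have hf1 : Integrable (fun ω => (1 - t) * Ψ ω) P := hΨint.const_mul _
  have hf2 : Integrable (fun ω => t * (1 - Ψ ω)) P :=
    ((integrable_const (1:ℝ)).sub hΨint).const_mul _
  have hmin_int : Integrable (fun ω => min ((1 - t) * Ψ ω) (t * (1 - Ψ ω))) P := hf1.inf hf2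
  -- the value of cwLoss on measurable H
  have key : ∀ H : Set Ω, MeasurableSet[mH] H →
      cwLoss P A H t = ∫ ω, (Hᶜ.indicator (fun ω => (1 - t) * Ψ ω) ω
        + H.indicator (fun ω => t * (1 - Ψ ω)) ω) ∂P := by
    intro H hHmH
    have hHm : MeasurableSet H := hH _ hHmH
    have ha : (P (A ∩ Hᶜ)).toReal = ∫ ω in Hᶜ, Ψ ω ∂P := by
      rw [setIntegral_condExp hH hInd hHmH.compl]
      rw [setIntegral_indicator hA, setIntegral_const]
      simp [Set.inter_comm]
      rfl
    have hb : (P (Aᶜ ∩ H)).toReal = ∫ ω in H, (1 - Ψ ω) ∂P := by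
      have h1 : ∫ ω in H, (1 - Ψ ω) ∂P = (P H).toReal - ∫ ω in H, Ψ ω ∂P := by
        rw [integral_sub (integrable_const 1).integrableOn hΨint.integrableOn]
        simp
        rfl
      have h2 : ∫ ω in H, Ψ ω ∂P = (P (H ∩ A)).toReal := by
        rw [setIntegral_condExp hH hInd hHmH, setIntegral_indicator hA, setIntegral_const]
        simp
        rfl
      have h3 : P (H ∩ A) + P (H \ A) = P H := measure_inter_add_diff H hA
      have h4 : (P (H ∩ A)).toReal + (P (H \ A)).toReal = (P H).toReal := by
        rw [← ENNReal.toReal_add (measure_ne_top _ _) (measure_ne_top _ _), h3]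
      have h5 : Aᶜ ∩ H = H \ A := by ext ω; simp [Set.mem_diff]; tauto
      rw [h1, h2, h5]; linarith
    rw [cwLoss, ha, hb, integral_add (hf1.indicator hHm.compl) (hf2.indicator hHm)]
    rw [MeasureTheory.integral_indicator hHm.compl, MeasureTheory.integral_indicator hHm]
    rw [← integral_const_mul, ← integral_const_mul]
  -- lower bound
  have hlb : ∀ H : {H : Set Ω // MeasurableSet[mH] H},
      (∫ ω, min ((1 - t) * Ψ ω) (t * (1 - Ψ ω)) ∂P) ≤ cwLoss P A H t := by
    rintro ⟨H, hHmH⟩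
    rw [key H hHmH]
    apply integral_mono hmin_int
    · exact (hf1.indicator ((hH _ hHmH).compl)).add (hf2.indicator (hH _ hHmH))
    · intro ω
      by_cases hω : ω ∈ H
      · simp only [Set.indicator_of_mem hω, Set.indicator_of_notMem (by simp [hω] : ω ∉ Hᶜ)]
        rw [zero_add]; exact min_le_right _ _
      · simp only [Set.indicator_of_notMem hω, Set.indicator_of_mem (by simp [hω] : ω ∈ Hᶜ)]
        rw [add_zero]; exact min_le_left _ _
  haveI : Nonempty {H : Set Ω // MeasurableSet[mH] H} := ⟨⟨∅, @MeasurableSet.empty _ mH⟩⟩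
  refine le_antisymm ?_ (le_ciInf hlb)
  -- attained at H₀
  have hΨmeas : Measurable[mH] Ψ := stronglyMeasurable_condExp.measurable
  set H₀ : Set Ω := {ω | t * (1 - Ψ ω) ≤ (1 - t) * Ψ ω} with hH₀def
  have hH₀mH : MeasurableSet[mH] H₀ := by
    apply measurableSet_le (measurable_const.mul (measurable_const.sub hΨmeas))
      (measurable_const.mul hΨmeas)
  have hval : cwLoss P A H₀ t = ∫ ω, min ((1 - t) * Ψ ω) (t * (1 - Ψ ω)) ∂P := by
    rw [key H₀ hH₀mH]
    apply MeasureTheory.integral_congr_ae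
    filter_upwards with ω
    by_cases hω : ω ∈ H₀
    · rw [Set.indicator_of_mem hω, Set.indicator_of_notMem (by simp [hω] : ω ∉ H₀ᶜ),
        min_eq_right hω]
      simp
    · rw [Set.indicator_of_notMem hω, Set.indicator_of_mem (by simp [hω] : ω ∈ H₀ᶜ),
        min_eq_left (le_of_not_ge hω)]
      simp
  calc bayesLoss P A mH t ≤ cwLoss P A H₀ t :=
        ciInf_le ⟨_, Set.forall_mem_range.mpr hlb⟩ ⟨H₀, hH₀mH⟩
    _ = _ := hval


lemma aux_main {Ω : Type*} {mH : MeasurableSpace Ω} {mΩ : MeasurableSpace Ω}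
    {P : Measure Ω} [IsProbabilityMeasure P]
    {A : Set Ω} (hA : MeasurableSet A) (hH : mH ≤ mΩ) :
    2 * ∫ t in (0 : ℝ)..1, bayesLoss P A mH t
      = ∫ ω, (P[A.indicator (fun _ => (1 : ℝ)) | mH]) ω
          * (1 - (P[A.indicator (fun _ => (1 : ℝ)) | mH]) ω) ∂P := by
  set Ψ := P[A.indicator (fun _ => (1:ℝ)) | mH] with hΨdef
  have hInd : Integrable (A.indicator fun _ => (1:ℝ)) P := (integrable_const 1).indicator hA
  have hΨint : Integrable Ψ P := integrable_condExp
  have hΨmeas : Measurable Ψ := (stronglyMeasurable_condExp.measurable).mono hH le_rfl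
  have hΨ0 : 0 ≤ᵐ[P] Ψ :=
    condExp_nonneg (Filter.Eventually.of_forall fun ω =>
      Set.indicator_nonneg (fun _ _ => zero_le_one) ω)
  have hΨ1 : ∀ᵐ ω ∂P, Ψ ω ≤ 1 := by
    have h := condExp_mono (m := mH) hInd (integrable_const (1:ℝ))
      (Filter.Eventually.of_forall fun ω => by
        by_cases hω : ω ∈ A <;> simp [Set.indicator_of_mem, Set.indicator_of_notMem, hω])
    rw [condExp_const hH (1:ℝ)] at h
    exact h
  have step1 : (∫ t in (0:ℝ)..1, bayesLoss P A mH t)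
      = ∫ t in (0:ℝ)..1, ∫ ω, min ((1 - t) * Ψ ω) (t * (1 - Ψ ω)) ∂P := by
    apply intervalIntegral.integral_congr
    intro t ht
    rw [Set.uIcc_of_le zero_le_one] at ht
    exact aux_bayes hA hH ht.1 ht.2
  have hFmeas : StronglyMeasurable
      (fun p : ℝ × Ω => min ((1 - p.1) * Ψ p.2) (p.1 * (1 - Ψ p.2))) :=
    (((measurable_const.sub measurable_fst).mul (hΨmeas.comp measurable_snd)).min
      (measurable_fst.mul (measurable_const.sub (hΨmeas.comp measurable_snd)))).stronglyMeasurable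
  set μ := volume.restrict (Set.Ioc (0:ℝ) 1) with hμdef
  have hFint : Integrable
      (fun p : ℝ × Ω => min ((1 - p.1) * Ψ p.2) (p.1 * (1 - Ψ p.2))) (μ.prod P) := by
    rw [integrable_prod_iff hFmeas.aestronglyMeasurable]
    constructor
    · refine Filter.Eventually.of_forall fun t => ?_
      have h : Integrable (fun ω : Ω => min ((1 - t) * Ψ ω) (t * (1 - Ψ ω))) P :=
        (hΨint.const_mul _).inf (((integrable_const (1:ℝ)).sub hΨint).const_mul _)
      exact h
    · have hmeas2 : StronglyMeasurable
          (fun t : ℝ => ∫ ω, ‖min ((1 - t) * Ψ ω) (t * (1 - Ψ ω))‖ ∂P) :=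
        hFmeas.norm.integral_prod_right'
      apply Integrable.mono' (integrable_const (∫ ω, (|Ψ ω| + |1 - Ψ ω|) ∂P))
        hmeas2.aestronglyMeasurable
      rw [hμdef]
      filter_upwards [ae_restrict_mem measurableSet_Ioc] with t ht
      rw [Real.norm_of_nonneg (integral_nonneg fun ω => norm_nonneg _)]
      apply integral_mono _ (hΨint.abs.add ((integrable_const (1:ℝ)).sub hΨint).abs)
      · intro ω
        show ‖min ((1 - t) * Ψ ω) (t * (1 - Ψ ω))‖ ≤ |Ψ ω| + |1 - Ψ ω|
        have h1t : |1 - t| ≤ 1 := by rw [abs_of_nonneg (by linarith [ht.2])]; linarith [ht.1]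
        have ht' : |t| ≤ 1 := by rw [abs_of_nonneg (le_of_lt ht.1)]; exact ht.2
        have h1 : |(1 - t) * Ψ ω| ≤ |Ψ ω| := by
          rw [abs_mul]
          exact mul_le_of_le_one_left (abs_nonneg _) h1t
        have h2 : |t * (1 - Ψ ω)| ≤ |1 - Ψ ω| := by
          rw [abs_mul]
          exact mul_le_of_le_one_left (abs_nonneg _) ht'
        rcases le_total ((1 - t) * Ψ ω) (t * (1 - Ψ ω)) with h | h
        · rw [min_eq_left h, Real.norm_eq_abs]
          have := abs_nonneg (1 - Ψ ω); linarith
        · rw [min_eq_right h, Real.norm_eq_abs]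
          have := abs_nonneg (Ψ ω); linarith
      · have h : Integrable (fun ω : Ω => min ((1 - t) * Ψ ω) (t * (1 - Ψ ω))) P :=
          (hΨint.const_mul _).inf (((integrable_const (1:ℝ)).sub hΨint).const_mul _)
        exact h.norm
  have step3 : (∫ t in Set.Ioc (0:ℝ) 1, (∫ ω, min ((1 - t) * Ψ ω) (t * (1 - Ψ ω)) ∂P))
      = ∫ ω, (∫ t in Set.Ioc (0:ℝ) 1, min ((1 - t) * Ψ ω) (t * (1 - Ψ ω))) ∂P :=
    integral_integral_swap (f := fun t ω => min ((1 - t) * Ψ ω) (t * (1 - Ψ ω))) hFint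
  have step4 : (∫ ω, (∫ t in Set.Ioc (0:ℝ) 1, min ((1 - t) * Ψ ω) (t * (1 - Ψ ω))) ∂P)
      = ∫ ω, Ψ ω * (1 - Ψ ω) / 2 ∂P := by
    apply MeasureTheory.integral_congr_ae
    filter_upwards [hΨ0, hΨ1] with ω h0 h1
    exact aux_inner _ h0 h1
  rw [step1, intervalIntegral.integral_of_le zero_le_one, step3, step4, ← integral_const_mul]
  apply MeasureTheory.integral_congr_ae
  filter_upwards with ω
  ring


/-- **Proposition 6, eq. (area*)**: twice the area under the cost-weighted Bayes loss curve
of `ℋ` equals the refinement loss `E[Ψ (1 − Ψ)]`, where `Ψ = P[A | ℋ]`. -/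
theorem area_under_bayes_loss_curve_eq_refinement_loss
    {Ω : Type*} {mΩ : MeasurableSpace Ω} {P : Measure Ω} [IsProbabilityMeasure P]
    {A : Set Ω} (hA : MeasurableSet A) (hA0 : 0 < P A) (hA1 : P A < 1)
    {mH : MeasurableSpace Ω} (hH : mH ≤ mΩ) (hAH : ¬ MeasurableSet[mH] A) :
    2 * ∫ t in (0 : ℝ)..1, bayesLoss P A mH t
      = ∫ ω, (P[A.indicator (fun _ => (1 : ℝ)) | mH]) ω
          * (1 - (P[A.indicator (fun _ => (1 : ℝ)) | mH]) ω) ∂P := by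
  exact aux_main hA hH
end

section
/- Let 𝒢 be a sub-σ-field of ℋ, Ψ = P[A | 𝒢] a version of the conditional probability with values in [0,1], and B(t) = L({Ψ > t}, t) its Brier curve. Then B(t) = E[min((1−t)Ψ, t(1−Ψ))] for all t ∈ [0,1]; in particular, B is concave and continuous on [0,1] with B(0) = 0. -/
open MeasureTheory

lemma brier_aux_indicator_int {Ω : Type*} {mΩ : MeasurableSpace Ω} {P : Measure Ω}
    [IsFiniteMeasure P] {A : Set Ω} (hA : MeasurableSet A) (s : Set Ω) :
    ∫ ω in s, A.indicator (fun _ => (1 : ℝ)) ω ∂P = (P (A ∩ s)).toReal := by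
  rw [setIntegral_indicator hA, setIntegral_const, Set.inter_comm s A]
  simp
  rfl

lemma brier_aux_integrable_indicator {Ω : Type*} {mΩ : MeasurableSpace Ω} {P : Measure Ω}
    [IsFiniteMeasure P] {A : Set Ω} (hA : MeasurableSet A) :
    Integrable (A.indicator (fun _ => (1 : ℝ))) P :=
  (integrable_const 1).indicator hA

/-- Auxiliary: the whole statement, with the conditional-expectation property abstracted
into the hypotheses `key`/`keyc`, in a context with a single measurable-space instance. -/
lemma brier_aux {Ω : Type*} {mΩ : MeasurableSpace Ω} {P : Measure Ω} [IsProbabilityMeasure P]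
    {A : Set Ω} (hA : MeasurableSet A)
    {Ψ : Ω → ℝ} (hΨmΩ : Measurable Ψ) (hΨ01 : ∀ ω, Ψ ω ∈ Set.Icc (0 : ℝ) 1)
    (key : ∀ t : ℝ, (P (A ∩ {ω | Ψ ω > t})).toReal = ∫ ω in {ω | Ψ ω > t}, Ψ ω ∂P)
    (keyc : ∀ t : ℝ, (P (A ∩ {ω | Ψ ω > t}ᶜ)).toReal = ∫ ω in {ω | Ψ ω > t}ᶜ, Ψ ω ∂P)
    (B : ℝ → ℝ) (hB : ∀ t, B t = cwLoss P A {ω | Ψ ω > t} t) :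
    (∀ t ∈ Set.Icc (0 : ℝ) 1, B t = ∫ ω, min ((1 - t) * Ψ ω) (t * (1 - Ψ ω)) ∂P)
    ∧ ConcaveOn ℝ (Set.Icc (0 : ℝ) 1) B
    ∧ ContinuousOn B (Set.Icc (0 : ℝ) 1)
    ∧ B 0 = 0 := by
  have hΨint : Integrable Ψ P := by
    refine (integrable_const (1 : ℝ)).mono' hΨmΩ.aestronglyMeasurable (ae_of_all _ fun ω => ?_)
    have h1 := (hΨ01 ω).1; have h2 := (hΨ01 ω).2
    rw [Real.norm_eq_abs, abs_le]; constructor <;> linarith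
  have hminm : ∀ t : ℝ, Measurable (fun ω => min ((1 - t) * Ψ ω) (t * (1 - Ψ ω))) := fun t =>
    (hΨmΩ.const_mul _).min ((measurable_const.sub hΨmΩ).const_mul _)
  have hmin : ∀ t : ℝ, Integrable (fun ω => min ((1 - t) * Ψ ω) (t * (1 - Ψ ω))) P := by
    intro t
    refine (integrable_const (|1 - t| + |t|)).mono' (hminm t).aestronglyMeasurable
      (ae_of_all _ fun ω => ?_)
    have h1 := (hΨ01 ω).1; have h2 := (hΨ01 ω).2
    have hΨa : |Ψ ω| ≤ 1 := abs_le.mpr ⟨by linarith, h2⟩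
    have hΨb : |1 - Ψ ω| ≤ 1 := abs_le.mpr ⟨by linarith, by linarith⟩
    have ha : |(1 - t) * Ψ ω| ≤ |1 - t| := by
      rw [abs_mul]
      calc |1 - t| * |Ψ ω| ≤ |1 - t| * 1 := mul_le_mul_of_nonneg_left hΨa (abs_nonneg _)
        _ = |1 - t| := mul_one _
    have hb : |t * (1 - Ψ ω)| ≤ |t| := by
      rw [abs_mul]
      calc |t| * |1 - Ψ ω| ≤ |t| * 1 := mul_le_mul_of_nonneg_left hΨb (abs_nonneg _)
        _ = |t| := mul_one _
    rw [Real.norm_eq_abs]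
    rcases min_cases ((1 - t) * Ψ ω) (t * (1 - Ψ ω)) with ⟨h, _⟩ | ⟨h, _⟩ <;> rw [h] <;>
      [(have := abs_nonneg t); (have := abs_nonneg (1 - t))] <;> linarith
  -- the representation, valid for every real t
  have repr : ∀ t : ℝ, B t = ∫ ω, min ((1 - t) * Ψ ω) (t * (1 - Ψ ω)) ∂P := by
    intro t
    set S : Set Ω := {ω | Ψ ω > t} with hSdef
    have hS : MeasurableSet S := hΨmΩ measurableSet_Ioi
    have h2 : (P (Aᶜ ∩ S)).toReal = (P S).toReal - (P (A ∩ S)).toReal := by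
      have hu : P (A ∩ S) + P (Aᶜ ∩ S) = P S := by
        have h := measure_inter_add_diff (μ := P) S hA
        rw [Set.inter_comm] at h
        have hdiff : S \ A = Aᶜ ∩ S := by ext ω; simp [Set.diff_eq, Set.inter_comm, and_comm]
        rw [hdiff] at h
        exact h
      have h := congrArg ENNReal.toReal hu
      rw [ENNReal.toReal_add (measure_ne_top P _) (measure_ne_top P _)] at h
      linarith
    have hSint1 : ∫ ω in S, (1 - Ψ ω) ∂P = (P S).toReal - ∫ ω in S, Ψ ω ∂P := by
      rw [integral_sub (integrable_const 1) hΨint.restrict, setIntegral_const]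
      simp
      rfl
    have e1 : ∫ ω in Sᶜ, min ((1 - t) * Ψ ω) (t * (1 - Ψ ω)) ∂P
        = ∫ ω in Sᶜ, (1 - t) * Ψ ω ∂P := by
      refine setIntegral_congr_fun hS.compl fun ω hω => ?_
      have hle : Ψ ω ≤ t := not_lt.mp hω
      exact min_eq_left (by nlinarith)
    have e2 : ∫ ω in S, min ((1 - t) * Ψ ω) (t * (1 - Ψ ω)) ∂P
        = ∫ ω in S, t * (1 - Ψ ω) ∂P := by
      refine setIntegral_congr_fun hS fun ω hω => ?_
      have hle : t ≤ Ψ ω := le_of_lt hω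
      exact min_eq_right (by nlinarith)
    calc B t = (1 - t) * (P (A ∩ Sᶜ)).toReal + t * (P (Aᶜ ∩ S)).toReal := by
          rw [hB]; rfl
      _ = (1 - t) * (∫ ω in Sᶜ, Ψ ω ∂P)
          + t * ((P S).toReal - ∫ ω in S, Ψ ω ∂P) := by rw [keyc t, h2, key t]
      _ = (∫ ω in Sᶜ, (1 - t) * Ψ ω ∂P) + (∫ ω in S, t * (1 - Ψ ω) ∂P) := by
          rw [integral_const_mul, integral_const_mul, hSint1]
      _ = (∫ ω in Sᶜ, min ((1 - t) * Ψ ω) (t * (1 - Ψ ω)) ∂P)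
          + (∫ ω in S, min ((1 - t) * Ψ ω) (t * (1 - Ψ ω)) ∂P) := by rw [e1, e2]
      _ = ∫ ω, min ((1 - t) * Ψ ω) (t * (1 - Ψ ω)) ∂P := by
          rw [add_comm]; exact integral_add_compl hS (hmin t)
  refine ⟨fun t _ => repr t, ?_, ?_, ?_⟩
  · -- concavity
    refine ⟨convex_Icc 0 1, fun x _ y _ a b ha hb hab => ?_⟩
    simp only [smul_eq_mul]
    rw [repr, repr, repr]
    rw [← integral_const_mul, ← integral_const_mul,
      ← integral_add ((hmin x).const_mul a) ((hmin y).const_mul b)]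
    refine integral_mono (((hmin x).const_mul a).add ((hmin y).const_mul b)) (hmin _)
      fun ω => ?_
    have h1 := (hΨ01 ω).1; have h2 := (hΨ01 ω).2
    have mx1 := min_le_left ((1 - x) * Ψ ω) (x * (1 - Ψ ω))
    have mx2 := min_le_right ((1 - x) * Ψ ω) (x * (1 - Ψ ω))
    have my1 := min_le_left ((1 - y) * Ψ ω) (y * (1 - Ψ ω))
    have my2 := min_le_right ((1 - y) * Ψ ω) (y * (1 - Ψ ω))
    refine le_min ?_ ?_
    · nlinarith [mul_le_mul_of_nonneg_left mx1 ha, mul_le_mul_of_nonneg_left my1 hb]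
    · nlinarith [mul_le_mul_of_nonneg_left mx2 ha, mul_le_mul_of_nonneg_left my2 hb]
  · -- continuity
    have lip : LipschitzWith 1 (fun t => ∫ ω, min ((1 - t) * Ψ ω) (t * (1 - Ψ ω)) ∂P) := by
      refine LipschitzWith.of_dist_le_mul fun s t => ?_
      rw [Real.dist_eq, Real.dist_eq, NNReal.coe_one, one_mul]
      rw [← integral_sub (hmin s) (hmin t)]
      calc |∫ ω, (min ((1 - s) * Ψ ω) (s * (1 - Ψ ω))
              - min ((1 - t) * Ψ ω) (t * (1 - Ψ ω))) ∂P|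
          ≤ ∫ ω, |min ((1 - s) * Ψ ω) (s * (1 - Ψ ω))
              - min ((1 - t) * Ψ ω) (t * (1 - Ψ ω))| ∂P := by
            simpa [Real.norm_eq_abs] using
              norm_integral_le_integral_norm (μ := P)
                (f := fun ω => min ((1 - s) * Ψ ω) (s * (1 - Ψ ω))
                  - min ((1 - t) * Ψ ω) (t * (1 - Ψ ω)))
        _ ≤ ∫ _ω, |s - t| ∂P := by
            refine integral_mono ((hmin s).sub (hmin t)).abs (integrable_const _) fun ω => ?_
            have h1 := (hΨ01 ω).1; have h2 := (hΨ01 ω).2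
            refine le_trans (abs_min_sub_min_le_max _ _ _ _) (max_le ?_ ?_)
            · have h : (1 - s) * Ψ ω - (1 - t) * Ψ ω = (t - s) * Ψ ω := by ring
              rw [h, abs_mul]
              calc |t - s| * |Ψ ω| ≤ |t - s| * 1 :=
                    mul_le_mul_of_nonneg_left (abs_le.mpr ⟨by linarith, h2⟩) (abs_nonneg _)
                _ = |s - t| := by rw [mul_one, abs_sub_comm]
            · have h : s * (1 - Ψ ω) - t * (1 - Ψ ω) = (s - t) * (1 - Ψ ω) := by ring
              rw [h, abs_mul]
              calc |s - t| * |1 - Ψ ω| ≤ |s - t| * 1 :=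
                    mul_le_mul_of_nonneg_left (abs_le.mpr ⟨by linarith, by linarith⟩)
                      (abs_nonneg _)
                _ = |s - t| := mul_one _
        _ = |s - t| := by simp
    exact lip.continuous.continuousOn.congr fun t _ => repr t
  · -- B 0 = 0
    rw [repr 0]
    have h : (fun ω => min ((1 - 0) * Ψ ω) (0 * (1 - Ψ ω))) = fun _ => (0 : ℝ) :=
      funext fun ω => by
        rw [zero_mul, sub_zero, one_mul]
        exact min_eq_right (hΨ01 ω).1
    rw [h, integral_zero]

/-- **Proposition 7, items 1 (Brier curve of a calibrated classifier)**: for a `[0,1]`-valued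
version `Ψ` of `P[A | 𝒢]`, `𝒢 ⊆ ℋ`, the Brier curve `B(t) = L({Ψ > t}, t)` satisfies
`B(t) = E[min((1 − t) Ψ, t (1 − Ψ))]` for `t ∈ [0, 1]`; in particular `B` is concave and
continuous on `[0, 1]` with `B(0) = 0`. -/
theorem brier_curve_representation_concave_continuous
    {Ω : Type*} {mΩ : MeasurableSpace Ω} {P : Measure Ω} [IsProbabilityMeasure P]
    {A : Set Ω} (hA : MeasurableSet A) (hA0 : 0 < P A) (hA1 : P A < 1)
    {mH : MeasurableSpace Ω} (hH : mH ≤ mΩ) (hAH : ¬ MeasurableSet[mH] A)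
    {mG : MeasurableSpace Ω} (hG : mG ≤ mH)
    {Ψ : Ω → ℝ} (hΨm : Measurable[mG] Ψ) (hΨ01 : ∀ ω, Ψ ω ∈ Set.Icc (0 : ℝ) 1)
    (hΨ : Ψ =ᵐ[P] P[A.indicator (fun _ => (1 : ℝ)) | mG])
    (B : ℝ → ℝ) (hB : ∀ t, B t = cwLoss P A {ω | Ψ ω > t} t) :
    (∀ t ∈ Set.Icc (0 : ℝ) 1, B t = ∫ ω, min ((1 - t) * Ψ ω) (t * (1 - Ψ ω)) ∂P)
    ∧ ConcaveOn ℝ (Set.Icc (0 : ℝ) 1) B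
    ∧ ContinuousOn B (Set.Icc (0 : ℝ) 1)
    ∧ B 0 = 0 := by
  have hmGΩ : mG ≤ mΩ := hG.trans hH
  have hΨmΩ : Measurable[mΩ] Ψ := hΨm.mono hmGΩ le_rfl
  have hind : Integrable (A.indicator (fun _ => (1 : ℝ))) P := brier_aux_integrable_indicator hA
  have key0 : ∀ s : Set Ω, MeasurableSet[mG] s →
      (P (A ∩ s)).toReal = ∫ ω in s, Ψ ω ∂P := by
    intro s hs
    calc (P (A ∩ s)).toReal
        = ∫ ω in s, A.indicator (fun _ => (1 : ℝ)) ω ∂P := (brier_aux_indicator_int hA s).symm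
      _ = ∫ ω in s, (P[A.indicator (fun _ => (1 : ℝ)) | mG]) ω ∂P :=
          (setIntegral_condExp hmGΩ hind hs).symm
      _ = ∫ ω in s, Ψ ω ∂P := (integral_congr_ae (ae_restrict_of_ae hΨ)).symm
  exact brier_aux hA hΨmΩ hΨ01
    (fun t => key0 _ (hΨm measurableSet_Ioi))
    (fun t => key0 _ (hΨm measurableSet_Ioi).compl) B hB
end

section
/- Let 𝒢 be a sub-σ-field of ℋ, Ψ = P[A | 𝒢] a version of the conditional probability with values in [0,1], and B(t) = L({Ψ > t}, t) its Brier curve. Then for all t ∈ [0,1]: min(t, 1−t) · E[Ψ(1−Ψ)] ≤ B(t) ≤ E[Ψ(1−Ψ)]. -/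
open MeasureTheory

lemma brier_curve_bounds_aux
    {Ω : Type*} (mG : MeasurableSpace Ω) [mΩ : MeasurableSpace Ω] (hGΩ : mG ≤ mΩ)
    {P : Measure Ω} [IsProbabilityMeasure P]
    {A : Set Ω} (hA : MeasurableSet A)
    {Ψ : Ω → ℝ} (hΨm : Measurable[mG] Ψ) (hΨ01 : ∀ ω, Ψ ω ∈ Set.Icc (0 : ℝ) 1)
    (hΨ : Ψ =ᵐ[P] P[A.indicator (fun _ => (1 : ℝ)) | mG])
    (B : ℝ → ℝ) (hB : ∀ t, B t = cwLoss P A {ω | Ψ ω > t} t) :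
    ∀ t ∈ Set.Icc (0 : ℝ) 1,
      min t (1 - t) * ∫ ω, Ψ ω * (1 - Ψ ω) ∂P ≤ B t
      ∧ B t ≤ ∫ ω, Ψ ω * (1 - Ψ ω) ∂P := by
  have hΨm' : Measurable Ψ := hΨm.mono hGΩ le_rfl
  have hΨint : Integrable Ψ P := by
    refine (integrable_const (1 : ℝ)).mono' hΨm'.aestronglyMeasurable ?_
    filter_upwards with ω
    rw [Real.norm_eq_abs, abs_le]
    exact ⟨by linarith [(hΨ01 ω).1], (hΨ01 ω).2⟩
  have hφm : Measurable fun ω => Ψ ω * (1 - Ψ ω) := hΨm'.mul (measurable_const.sub hΨm')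
  have hφint : Integrable (fun ω => Ψ ω * (1 - Ψ ω)) P := by
    refine (integrable_const (1 : ℝ)).mono' hφm.aestronglyMeasurable ?_
    filter_upwards with ω
    have h1 := (hΨ01 ω).1; have h2 := (hΨ01 ω).2
    rw [Real.norm_eq_abs, abs_le]
    constructor <;> nlinarith
  have key : ∀ s : Set Ω, MeasurableSet[mG] s →
      (P (A ∩ s)).toReal = ∫ ω in s, Ψ ω ∂P ∧
      (P (Aᶜ ∩ s)).toReal = ∫ ω in s, (1 - Ψ ω) ∂P := by
    intro s hs
    have hsΩ : MeasurableSet s := hGΩ s hs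
    have hindint : Integrable (A.indicator fun _ => (1 : ℝ)) P :=
      (integrable_const (1 : ℝ)).indicator hA
    have h1 : ∫ ω in s, Ψ ω ∂P = (P (A ∩ s)).toReal := by
      rw [setIntegral_congr_ae hsΩ (hΨ.mono fun ω h _ => h),
        setIntegral_condExp hGΩ hindint hs, setIntegral_indicator hA,
        setIntegral_const, smul_eq_mul, mul_one, Set.inter_comm]; rfl
    have h2 : (P (Aᶜ ∩ s)).toReal = (P s).toReal - (P (A ∩ s)).toReal := by
      have hadd : P (A ∩ s) + P (Aᶜ ∩ s) = P s := by
        rw [Set.inter_comm A s, Set.inter_comm Aᶜ s, ← Set.diff_eq]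
        exact measure_inter_add_diff s hA
      have hfin : P (A ∩ s) ≠ ⊤ := measure_ne_top _ _
      have hfin' : P (Aᶜ ∩ s) ≠ ⊤ := measure_ne_top _ _
      rw [← hadd, ENNReal.toReal_add hfin hfin']; ring
    refine ⟨h1.symm, ?_⟩
    rw [h2, integral_sub (integrable_const 1).integrableOn hΨint.integrableOn,
      setIntegral_const, smul_eq_mul, mul_one, h1]; rfl
  intro t ht
  set s : Set Ω := {ω | Ψ ω > t} with hsdef
  have hs : MeasurableSet[mG] s := measurableSet_lt measurable_const hΨm
  have hsc : MeasurableSet[mG] sᶜ := hs.compl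
  have hsΩ : MeasurableSet s := hGΩ s hs
  obtain ⟨h1, -⟩ := key sᶜ hsc
  obtain ⟨-, h2⟩ := key s hs
  have hBt : B t = (1 - t) * ∫ ω in sᶜ, Ψ ω ∂P + t * ∫ ω in s, (1 - Ψ ω) ∂P := by
    rw [hB t]; unfold cwLoss; rw [h1, h2]
  have hsplit : (∫ ω in s, Ψ ω * (1 - Ψ ω) ∂P) + (∫ ω in sᶜ, Ψ ω * (1 - Ψ ω) ∂P)
      = ∫ ω, Ψ ω * (1 - Ψ ω) ∂P := integral_add_compl hsΩ hφint
  have ht0 := ht.1; have ht1 := ht.2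
  constructor
  · have hl1 : ∫ ω in sᶜ, min t (1 - t) * (Ψ ω * (1 - Ψ ω)) ∂P ≤ ∫ ω in sᶜ, (1 - t) * Ψ ω ∂P := by
      refine setIntegral_mono_on ((hφint.const_mul _).integrableOn)
        ((hΨint.const_mul _).integrableOn) hsΩ.compl fun ω hω => ?_
      have hωle : Ψ ω ≤ t := not_lt.mp hω
      have h0 := (hΨ01 ω).1; have h1' := (hΨ01 ω).2
      have hm : min t (1 - t) ≤ 1 - t := min_le_right _ _
      have hφ0 : (0:ℝ) ≤ Ψ ω * (1 - Ψ ω) := mul_nonneg h0 (by linarith)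
      nlinarith [mul_le_mul_of_nonneg_right hm hφ0,
        mul_nonneg (mul_nonneg (by linarith : (0:ℝ) ≤ 1 - t) h0) h0]
    have hl2 : ∫ ω in s, min t (1 - t) * (Ψ ω * (1 - Ψ ω)) ∂P ≤ ∫ ω in s, t * (1 - Ψ ω) ∂P := by
      refine setIntegral_mono_on ((hφint.const_mul _).integrableOn)
        (((integrable_const 1).sub hΨint).const_mul _).integrableOn hsΩ fun ω hω => ?_
      have hωgt : t < Ψ ω := hω
      have h0 := (hΨ01 ω).1; have h1' := (hΨ01 ω).2
      have hm : min t (1 - t) ≤ t := min_le_left _ _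
      have hφ0 : (0:ℝ) ≤ Ψ ω * (1 - Ψ ω) := mul_nonneg h0 (by linarith)
      nlinarith [mul_le_mul_of_nonneg_right hm hφ0,
        mul_nonneg (mul_nonneg ht0 (by linarith : (0:ℝ) ≤ 1 - Ψ ω)) (by linarith : (0:ℝ) ≤ 1 - Ψ ω)]
    calc min t (1 - t) * ∫ ω, Ψ ω * (1 - Ψ ω) ∂P
        = (∫ ω in sᶜ, min t (1 - t) * (Ψ ω * (1 - Ψ ω)) ∂P)
          + ∫ ω in s, min t (1 - t) * (Ψ ω * (1 - Ψ ω)) ∂P := by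
          rw [integral_const_mul, integral_const_mul, ← hsplit]; ring
      _ ≤ (∫ ω in sᶜ, (1 - t) * Ψ ω ∂P) + ∫ ω in s, t * (1 - Ψ ω) ∂P := add_le_add hl1 hl2
      _ = B t := by rw [hBt, integral_const_mul, integral_const_mul]
  · have hu1 : ∫ ω in sᶜ, (1 - t) * Ψ ω ∂P ≤ ∫ ω in sᶜ, Ψ ω * (1 - Ψ ω) ∂P := by
      refine setIntegral_mono_on ((hΨint.const_mul _).integrableOn)
        hφint.integrableOn hsΩ.compl fun ω hω => ?_
      have hωle : Ψ ω ≤ t := not_lt.mp hω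
      have h0 := (hΨ01 ω).1; have h1' := (hΨ01 ω).2
      nlinarith
    have hu2 : ∫ ω in s, t * (1 - Ψ ω) ∂P ≤ ∫ ω in s, Ψ ω * (1 - Ψ ω) ∂P := by
      refine setIntegral_mono_on ((((integrable_const 1).sub hΨint).const_mul _).integrableOn)
        hφint.integrableOn hsΩ fun ω hω => ?_
      have hωgt : t < Ψ ω := hω
      have h0 := (hΨ01 ω).1; have h1' := (hΨ01 ω).2
      nlinarith
    calc B t = (∫ ω in sᶜ, (1 - t) * Ψ ω ∂P) + ∫ ω in s, t * (1 - Ψ ω) ∂P := by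
          rw [hBt, integral_const_mul, integral_const_mul]
      _ ≤ (∫ ω in sᶜ, Ψ ω * (1 - Ψ ω) ∂P) + ∫ ω in s, Ψ ω * (1 - Ψ ω) ∂P :=
          add_le_add hu1 hu2
      _ = ∫ ω, Ψ ω * (1 - Ψ ω) ∂P := by rw [← hsplit]; ring

/-- **Proposition 7, item 2 (bounds on the Brier curve)**: for a `[0,1]`-valued version `Ψ`
of `P[A | 𝒢]`, `𝒢 ⊆ ℋ`, the Brier curve `B(t) = L({Ψ > t}, t)` satisfies
`min(t, 1 − t) E[Ψ (1 − Ψ)] ≤ B(t) ≤ E[Ψ (1 − Ψ)]` for all `t ∈ [0, 1]`. -/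
theorem brier_curve_bounds
    {Ω : Type*} {mΩ : MeasurableSpace Ω} {P : Measure Ω} [IsProbabilityMeasure P]
    {A : Set Ω} (hA : MeasurableSet A) (hA0 : 0 < P A) (hA1 : P A < 1)
    {mH : MeasurableSpace Ω} (hH : mH ≤ mΩ) (hAH : ¬ MeasurableSet[mH] A)
    {mG : MeasurableSpace Ω} (hG : mG ≤ mH)
    {Ψ : Ω → ℝ} (hΨm : Measurable[mG] Ψ) (hΨ01 : ∀ ω, Ψ ω ∈ Set.Icc (0 : ℝ) 1)
    (hΨ : Ψ =ᵐ[P] P[A.indicator (fun _ => (1 : ℝ)) | mG])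
    (B : ℝ → ℝ) (hB : ∀ t, B t = cwLoss P A {ω | Ψ ω > t} t) :
    ∀ t ∈ Set.Icc (0 : ℝ) 1,
      min t (1 - t) * ∫ ω, Ψ ω * (1 - Ψ ω) ∂P ≤ B t
      ∧ B t ≤ ∫ ω, Ψ ω * (1 - Ψ ω) ∂P :=
  brier_curve_bounds_aux (mΩ := mΩ) mG (hG.trans hH) hA hΨm hΨ01 hΨ B hB
end

section
/- Let 𝒢 be a sub-σ-field of ℋ, Ψ = P[A | 𝒢] a version of the conditional probability with values in [0,1], and B(t) = L({Ψ > t}, t) its Brier curve. Then B has at each t ∈ [0,1) the right derivative (d⁺/dt) B(t) = 1 − P[A] − P[Ψ ≤ t], and at each t ∈ (0,1] the left derivative (d⁻/dt) B(t) = 1 − P[A] − P[Ψ < t]. -/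
open MeasureTheory Filter Set Topology

lemma brier_aux_right {Ω : Type*} {mΩ : MeasurableSpace Ω} (P : Measure Ω)
    [IsProbabilityMeasure P] {Ψ : Ω → ℝ} (hΨ : Measurable Ψ) (t : ℝ) :
    Tendsto (fun y => (P {ω | Ψ ω ≤ y}).toReal) (𝓝[>] t)
      (𝓝 (P {ω | Ψ ω ≤ t}).toReal) := by
  have h1 : Tendsto (fun y => P {ω | Ψ ω ≤ y}) (𝓝[>] t) (𝓝 (P {ω | Ψ ω ≤ t})) := by
    have h := tendsto_measure_biInter_gt (μ := P) (s := fun y => {ω | Ψ ω ≤ y}) (a := t)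
      (fun r _ => (hΨ measurableSet_Iic).nullMeasurableSet)
      (fun i j _ hij => fun ω (h : Ψ ω ≤ i) => le_trans h hij)
      ⟨t + 1, by linarith, measure_ne_top P _⟩
    have hint : ⋂ r > t, {ω | Ψ ω ≤ r} = {ω | Ψ ω ≤ t} := by
      ext ω
      simp only [Set.mem_iInter, Set.mem_setOf_eq]
      constructor
      · intro h
        by_contra hc
        push_neg at hc
        obtain ⟨r, hr1, hr2⟩ := exists_between hc
        exact absurd (h r hr1) (not_le.2 hr2)
      · intro h r hr
        exact h.trans hr.le
    rwa [hint] at h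
  exact (ENNReal.tendsto_toReal (measure_ne_top P _)).comp h1

lemma brier_aux_left {Ω : Type*} {mΩ : MeasurableSpace Ω} (P : Measure Ω)
    [IsProbabilityMeasure P] (Ψ : Ω → ℝ) (t : ℝ) :
    Tendsto (fun y => (P {ω | Ψ ω ≤ y}).toReal) (𝓝[<] t)
      (𝓝 (P {ω | Ψ ω < t}).toReal) := by
  have hmono : Monotone (fun y => P {ω | Ψ ω ≤ y}) :=
    fun i j hij => measure_mono (fun ω (h : Ψ ω ≤ i) => le_trans h hij)
  have h1 := hmono.tendsto_nhdsLT t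
  have hsup : sSup ((fun y => P {ω | Ψ ω ≤ y}) '' Set.Iio t) = P {ω | Ψ ω < t} := by
    apply le_antisymm
    · apply sSup_le
      rintro x ⟨y, hy, rfl⟩
      exact measure_mono (fun ω (h : Ψ ω ≤ y) => lt_of_le_of_lt h hy)
    · have hU : {ω | Ψ ω < t} = ⋃ n : ℕ, {ω | Ψ ω ≤ t - 1 / (n + 1)} := by
        ext ω
        simp only [Set.mem_setOf_eq, Set.mem_iUnion]
        constructor
        · intro h
          obtain ⟨n, hn⟩ := exists_nat_one_div_lt (show (0:ℝ) < t - Ψ ω by linarith)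
          exact ⟨n, by linarith⟩
        · rintro ⟨n, hn⟩
          have : (0:ℝ) < 1 / (n + 1) := by positivity
          linarith
      rw [hU, Directed.measure_iUnion]
      · apply iSup_le
        intro n
        apply le_sSup
        refine ⟨t - 1 / (n + 1), ?_, rfl⟩
        have : (0:ℝ) < 1 / (n + 1) := by positivity
        simp only [Set.mem_Iio]; linarith
      · apply Monotone.directed_le
        intro i j hij ω (h : Ψ ω ≤ t - 1 / (i + 1))
        have : (1:ℝ) / (j + 1) ≤ 1 / (i + 1) := by
          apply one_div_le_one_div_of_le (by positivity)
          exact_mod_cast add_le_add_left (Nat.cast_le.2 hij) 1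
        show Ψ ω ≤ t - 1 / (j + 1)
        linarith
  rw [hsup] at h1
  exact (ENNReal.tendsto_toReal (measure_ne_top P _)).comp h1

/-- **Proposition 7, item 4 (one-sided derivatives of the Brier curve)**: for a `[0,1]`-valued
version `Ψ` of `P[A | 𝒢]`, `𝒢 ⊆ ℋ`, the Brier curve `B(t) = L({Ψ > t}, t)` has at each
`t ∈ [0, 1)` the right derivative `1 − P[A] − P[Ψ ≤ t]` and at each `t ∈ (0, 1]` the left
derivative `1 − P[A] − P[Ψ < t]`. -/
theorem brier_curve_one_sided_derivatives
    {Ω : Type*} {mΩ : MeasurableSpace Ω} {P : Measure Ω} [IsProbabilityMeasure P]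
    {A : Set Ω} (hA : MeasurableSet A) (hA0 : 0 < P A) (hA1 : P A < 1)
    {mH : MeasurableSpace Ω} (hH : mH ≤ mΩ) (hAH : ¬ MeasurableSet[mH] A)
    {mG : MeasurableSpace Ω} (hG : mG ≤ mH)
    {Ψ : Ω → ℝ} (hΨm : Measurable[mG] Ψ) (hΨ01 : ∀ ω, Ψ ω ∈ Set.Icc (0 : ℝ) 1)
    (hΨ : Ψ =ᵐ[P] P[A.indicator (fun _ => (1 : ℝ)) | mG])
    (B : ℝ → ℝ) (hB : ∀ t, B t = cwLoss P A {ω | Ψ ω > t} t) :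
    (∀ t ∈ Set.Ico (0 : ℝ) 1,
      HasDerivWithinAt B (1 - (P A).toReal - (P {ω | Ψ ω ≤ t}).toReal) (Set.Ici t) t)
    ∧ (∀ t ∈ Set.Ioc (0 : ℝ) 1,
      HasDerivWithinAt B (1 - (P A).toReal - (P {ω | Ψ ω < t}).toReal) (Set.Iic t) t) := by
  letI m0 : MeasurableSpace Ω := mΩ
  have hmG : mG ≤ mΩ := hG.trans hH
  have hΨM : Measurable[mΩ] Ψ := hΨm.mono hmG le_rfl
  have hSmG : ∀ t : ℝ, MeasurableSet[mG] {ω | Ψ ω ≤ t} := fun t => hΨm measurableSet_Iic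
  have hSM : ∀ t : ℝ, MeasurableSet[mΩ] {ω | Ψ ω ≤ t} := fun t => hΨM measurableSet_Iic
  have hInd : Integrable (A.indicator (fun _ => (1 : ℝ))) P :=
    (integrable_const (1 : ℝ)).indicator hA
  have hΨint : Integrable Ψ P := integrable_condExp.congr hΨ.symm
  set a : ℝ := (P A).toReal with ha
  set F : ℝ → ℝ := fun t => (P {ω | Ψ ω ≤ t}).toReal with hFdef
  set G : ℝ → ℝ := fun t => ∫ ω in {ω | Ψ ω ≤ t}, Ψ ω ∂P with hGdef
  -- conditional expectation identity on mG-measurable sets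
  have hcond : ∀ s : Set Ω, MeasurableSet[mG] s →
      ∫ ω in s, Ψ ω ∂P = (P (A ∩ s)).toReal := by
    intro s hs
    calc ∫ ω in s, Ψ ω ∂P
        = ∫ ω in s, (P[A.indicator (fun _ => (1 : ℝ)) | mG]) ω ∂P :=
          integral_congr_ae (ae_restrict_of_ae hΨ)
      _ = ∫ ω in s, A.indicator (fun _ => (1 : ℝ)) ω ∂P := setIntegral_condExp hmG hInd hs
      _ = ∫ ω in s ∩ A, (1 : ℝ) ∂P := setIntegral_indicator hA
      _ = (P (A ∩ s)).toReal := by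
          rw [setIntegral_const (μ := P), Set.inter_comm, smul_eq_mul, mul_one, measureReal_def]
  -- monotonicity of F
  have hFmono : Monotone F := by
    intro i j hij
    exact ENNReal.toReal_mono (measure_ne_top P _)
      (measure_mono (fun ω (h : Ψ ω ≤ i) => le_trans h hij))
  -- key formula : B t = G t + t * (1 - a - F t)
  have hkey : ∀ t : ℝ, B t = G t + t * (1 - a - F t) := by
    intro t
    have hc : {ω | Ψ ω > t}ᶜ = {ω | Ψ ω ≤ t} := by ext ω; simp [not_lt]
    have hc' : {ω | Ψ ω > t} = {ω | Ψ ω ≤ t}ᶜ := by ext ω; simp [not_le]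
    have p1 : (P (A ∩ {ω | Ψ ω ≤ t})).toReal = G t := (hcond _ (hSmG t)).symm
    have e1 : (P (A ∩ {ω | Ψ ω ≤ t})).toReal + (P (A ∩ {ω | Ψ ω > t})).toReal = a := by
      rw [← ENNReal.toReal_add (measure_ne_top P _) (measure_ne_top P _)]
      congr 1
      have h := measure_inter_add_diff (μ := P) A (hSM t)
      rwa [Set.diff_eq, ← hc'] at h
    have e2 : (P (A ∩ {ω | Ψ ω > t})).toReal + (P (Aᶜ ∩ {ω | Ψ ω > t})).toReal
        = (P {ω | Ψ ω > t}).toReal := by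
      rw [← ENNReal.toReal_add (measure_ne_top P _) (measure_ne_top P _)]
      congr 1
      have h := measure_inter_add_diff (μ := P) {ω | Ψ ω > t} hA
      rwa [Set.inter_comm, Set.diff_eq, Set.inter_comm _ Aᶜ] at h
    have e3 : (P {ω | Ψ ω > t}).toReal + (P {ω | Ψ ω ≤ t}).toReal = 1 := by
      rw [← ENNReal.toReal_add (measure_ne_top P _) (measure_ne_top P _), hc', add_comm,
        measure_add_measure_compl (μ := P) (hSM t)]
      simp
    have p2 : (P (Aᶜ ∩ {ω | Ψ ω > t})).toReal = 1 - F t - (a - G t) := by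
      simp only [hFdef]; linarith
    rw [hB t, cwLoss, hc, p1, p2]
    simp only [hFdef]
    ring
  -- slab splitting
  have hdisj : ∀ s t : ℝ, Disjoint {ω | Ψ ω ≤ s} {ω | s < Ψ ω ∧ Ψ ω ≤ t} := by
    intro s t
    rw [Set.disjoint_left]
    rintro ω (h1 : Ψ ω ≤ s) ⟨h2, _⟩
    exact absurd h1 (not_le.2 h2)
  have hUM : ∀ s t : ℝ, MeasurableSet[mΩ] {ω | s < Ψ ω ∧ Ψ ω ≤ t} := fun s t =>
    hΨM measurableSet_Ioc
  have hunion : ∀ s t : ℝ, s ≤ t →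
      {ω | Ψ ω ≤ t} = {ω | Ψ ω ≤ s} ∪ {ω | s < Ψ ω ∧ Ψ ω ≤ t} := by
    intro s t hst
    ext ω
    simp only [Set.mem_setOf_eq, Set.mem_union]
    constructor
    · intro h
      rcases le_or_gt (Ψ ω) s with h' | h'
      · exact Or.inl h'
      · exact Or.inr ⟨h', h⟩
    · rintro (h | ⟨_, h⟩)
      · exact h.trans hst
      · exact h
  have hGdiff : ∀ s t : ℝ, s ≤ t →
      G t = G s + ∫ ω in {ω | s < Ψ ω ∧ Ψ ω ≤ t}, Ψ ω ∂P := by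
    intro s t hst
    simp only [hGdef]
    rw [hunion s t hst]
    exact setIntegral_union (μ := P) (hdisj s t) (hUM s t) hΨint.integrableOn hΨint.integrableOn
  have hFdiff : ∀ s t : ℝ, s ≤ t →
      (P {ω | s < Ψ ω ∧ Ψ ω ≤ t}).toReal = F t - F s := by
    intro s t hst
    have h := measure_union (μ := P) (hdisj s t) (hUM s t)
    rw [← hunion s t hst] at h
    simp only [hFdef]
    rw [h, ENNReal.toReal_add (measure_ne_top P _) (measure_ne_top P _)]
    ring
  have hIbound : ∀ s t : ℝ, s ≤ t →
      s * (F t - F s) ≤ (∫ ω in {ω | s < Ψ ω ∧ Ψ ω ≤ t}, Ψ ω ∂P) ∧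
      (∫ ω in {ω | s < Ψ ω ∧ Ψ ω ≤ t}, Ψ ω ∂P) ≤ t * (F t - F s) := by
    intro s t hst
    have hfin : P {ω | s < Ψ ω ∧ Ψ ω ≤ t} < ⊤ := measure_lt_top P _
    constructor
    · have h1 : (∫ ω in {ω | s < Ψ ω ∧ Ψ ω ≤ t}, s ∂P) ≤
          ∫ ω in {ω | s < Ψ ω ∧ Ψ ω ≤ t}, Ψ ω ∂P := by
        apply setIntegral_mono_on ((integrableOn_const_iff (μ := P)).2 (Or.inr hfin))
          hΨint.integrableOn (hUM s t)
        exact fun ω hω => hω.1.le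
      rwa [setIntegral_const (μ := P), smul_eq_mul, measureReal_def, hFdiff s t hst, mul_comm] at h1
    · have h1 : (∫ ω in {ω | s < Ψ ω ∧ Ψ ω ≤ t}, Ψ ω ∂P) ≤
          ∫ ω in {ω | s < Ψ ω ∧ Ψ ω ≤ t}, t ∂P := by
        apply setIntegral_mono_on (μ := P) hΨint.integrableOn
          ((integrableOn_const_iff (μ := P)).2 (Or.inr hfin)) (hUM s t)
        exact fun ω hω => hω.2
      rwa [setIntegral_const (μ := P), smul_eq_mul, measureReal_def, hFdiff s t hst, mul_comm] at h1
  constructor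
  · -- right derivative
    intro t _
    rw [hasDerivWithinAt_iff_tendsto_slope, Set.Ici_sdiff_left]
    have hFt : Tendsto (fun y => F y) (𝓝[>] t) (𝓝 (F t)) := brier_aux_right P hΨM t
    show Tendsto (slope B t) (𝓝[>] t) (𝓝 (1 - a - F t))
    have hslope : ∀ y, t < y →
        (1 - a - F t) - (F y - F t) ≤ slope B t y ∧ slope B t y ≤ 1 - a - F t := by
      intro y hty
      obtain ⟨hlo, hhi⟩ := hIbound t y hty.le
      have hGd := hGdiff t y hty.le
      constructor
      · rw [slope_def_field, hkey y, hkey t, le_div_iff₀ (by linarith : (0:ℝ) < y - t)]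
        nlinarith [hlo, hGd]
      · rw [slope_def_field, hkey y, hkey t, div_le_iff₀ (by linarith : (0:ℝ) < y - t)]
        nlinarith [hhi, hGd]
    apply tendsto_of_tendsto_of_tendsto_of_le_of_le'
      (g := fun y => (1 - a - F t) - (F y - F t)) (h := fun _ => 1 - a - F t)
    · have h : Tendsto (fun y => (1 - a - F t) - (F y - F t)) (𝓝[>] t)
          (𝓝 ((1 - a - F t) - (F t - F t))) :=
        Tendsto.sub tendsto_const_nhds (Tendsto.sub hFt tendsto_const_nhds)
      simpa using h
    · exact tendsto_const_nhds
    · filter_upwards [self_mem_nhdsWithin] with y hy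
      exact (hslope y hy).1
    · filter_upwards [self_mem_nhdsWithin] with y hy
      exact (hslope y hy).2
  · -- left derivative
    intro t _
    rw [hasDerivWithinAt_iff_tendsto_slope, Set.Iic_sdiff_right]
    have hFt : Tendsto (fun y => F y) (𝓝[<] t) (𝓝 ((P {ω | Ψ ω < t}).toReal)) :=
      brier_aux_left P Ψ t
    set Fm : ℝ := (P {ω | Ψ ω < t}).toReal with hFm
    show Tendsto (slope B t) (𝓝[<] t) (𝓝 (1 - a - Fm))
    have hVM : MeasurableSet[mΩ] {ω | Ψ ω < t} := hΨM measurableSet_Iio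
    have hEM : MeasurableSet[mΩ] {ω | Ψ ω = t} := hΨM (measurableSet_singleton t)
    have hsplitC : {ω | Ψ ω ≤ t} = {ω | Ψ ω < t} ∪ {ω | Ψ ω = t} := by
      ext ω
      simp only [Set.mem_setOf_eq, Set.mem_union]
      exact le_iff_lt_or_eq
    have hdisjC : Disjoint {ω | Ψ ω < t} {ω | Ψ ω = t} := by
      rw [Set.disjoint_left]
      rintro ω (h1 : Ψ ω < t) (h2 : Ψ ω = t)
      exact absurd h2 (ne_of_lt h1)
    have hm2 : (P {ω | Ψ ω = t}).toReal = F t - Fm := by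
      have h := measure_union (μ := P) hdisjC hEM
      rw [← hsplitC] at h
      simp only [hFdef, hFm]
      rw [h, ENNReal.toReal_add (measure_ne_top P _) (measure_ne_top P _)]
      ring
    have hIE : (∫ ω in {ω | Ψ ω = t}, Ψ ω ∂P) = t * (F t - Fm) := by
      have h : (∫ ω in {ω | Ψ ω = t}, Ψ ω ∂P) = ∫ ω in {ω | Ψ ω = t}, t ∂P :=
        setIntegral_congr_fun (μ := P) hEM (fun ω hω => hω)
      rw [h, setIntegral_const (μ := P), smul_eq_mul, measureReal_def, hm2, mul_comm]
    have hslope : ∀ y, y < t →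
        1 - a - Fm ≤ slope B t y ∧ slope B t y ≤ (1 - a - Fm) + (Fm - F y) := by
      intro y hyt
      have hsA : {ω | y < Ψ ω ∧ Ψ ω ≤ t} = {ω | y < Ψ ω ∧ Ψ ω < t} ∪ {ω | Ψ ω = t} := by
        ext ω
        simp only [Set.mem_setOf_eq, Set.mem_union]
        constructor
        · rintro ⟨h1, h2⟩
          rcases lt_or_eq_of_le h2 with h3 | h3
          · exact Or.inl ⟨h1, h3⟩
          · exact Or.inr h3
        · rintro (⟨h1, h2⟩ | h1)
          · exact ⟨h1, h2.le⟩
          · exact ⟨h1 ▸ hyt, h1.le⟩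
      have hdisjA : Disjoint {ω | y < Ψ ω ∧ Ψ ω < t} {ω | Ψ ω = t} := by
        rw [Set.disjoint_left]
        rintro ω ⟨_, h2⟩ (h3 : Ψ ω = t)
        exact absurd h3 (ne_of_lt h2)
      have hWM : MeasurableSet[mΩ] {ω | y < Ψ ω ∧ Ψ ω < t} := hΨM measurableSet_Ioo
      have hsB : {ω | Ψ ω < t} = {ω | Ψ ω ≤ y} ∪ {ω | y < Ψ ω ∧ Ψ ω < t} := by
        ext ω
        simp only [Set.mem_setOf_eq, Set.mem_union]
        constructor
        · intro h
          rcases le_or_gt (Ψ ω) y with h' | h'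
          · exact Or.inl h'
          · exact Or.inr ⟨h', h⟩
        · rintro (h | ⟨_, h⟩)
          · exact lt_of_le_of_lt h hyt
          · exact h
      have hdisjB : Disjoint {ω | Ψ ω ≤ y} {ω | y < Ψ ω ∧ Ψ ω < t} := by
        rw [Set.disjoint_left]
        rintro ω (h1 : Ψ ω ≤ y) ⟨h2, _⟩
        exact absurd h1 (not_le.2 h2)
      have hm1 : (P {ω | y < Ψ ω ∧ Ψ ω < t}).toReal = Fm - F y := by
        have h := measure_union (μ := P) hdisjB hWM
        rw [← hsB] at h
        simp only [hFdef, hFm]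
        rw [h, ENNReal.toReal_add (measure_ne_top P _) (measure_ne_top P _)]
        ring
      have hGsplit : (∫ ω in {ω | y < Ψ ω ∧ Ψ ω ≤ t}, Ψ ω ∂P)
          = (∫ ω in {ω | y < Ψ ω ∧ Ψ ω < t}, Ψ ω ∂P) + t * (F t - Fm) := by
        rw [hsA, setIntegral_union (μ := P) hdisjA hEM hΨint.integrableOn hΨint.integrableOn, hIE]
      have hGd := hGdiff y t hyt.le
      have hfin : P {ω | y < Ψ ω ∧ Ψ ω < t} < ⊤ := measure_lt_top P _
      have hI1lo : y * (Fm - F y) ≤ ∫ ω in {ω | y < Ψ ω ∧ Ψ ω < t}, Ψ ω ∂P := by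
        have h1 : (∫ ω in {ω | y < Ψ ω ∧ Ψ ω < t}, y ∂P) ≤
            ∫ ω in {ω | y < Ψ ω ∧ Ψ ω < t}, Ψ ω ∂P := by
          apply setIntegral_mono_on ((integrableOn_const_iff (μ := P)).2 (Or.inr hfin))
            hΨint.integrableOn hWM
          exact fun ω hω => hω.1.le
        rwa [setIntegral_const (μ := P), smul_eq_mul, measureReal_def, hm1, mul_comm] at h1
      have hI1hi : (∫ ω in {ω | y < Ψ ω ∧ Ψ ω < t}, Ψ ω ∂P) ≤ t * (Fm - F y) := by
        have h1 : (∫ ω in {ω | y < Ψ ω ∧ Ψ ω < t}, Ψ ω ∂P) ≤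
            ∫ ω in {ω | y < Ψ ω ∧ Ψ ω < t}, t ∂P := by
          apply setIntegral_mono_on (μ := P) hΨint.integrableOn
            ((integrableOn_const_iff (μ := P)).2 (Or.inr hfin)) hWM
          exact fun ω hω => hω.2.le
        rwa [setIntegral_const (μ := P), smul_eq_mul, measureReal_def, hm1, mul_comm] at h1
      constructor
      · rw [slope_def_field, hkey y, hkey t, le_div_iff_of_neg (by linarith : y - t < 0)]
        nlinarith [hI1lo, hGd, hGsplit]
      · rw [slope_def_field, hkey y, hkey t, div_le_iff_of_neg (by linarith : y - t < 0)]
        nlinarith [hI1hi, hGd, hGsplit]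
    apply tendsto_of_tendsto_of_tendsto_of_le_of_le'
      (g := fun _ => 1 - a - Fm) (h := fun y => (1 - a - Fm) + (Fm - F y))
    · exact tendsto_const_nhds
    · have h : Tendsto (fun y => (1 - a - Fm) + (Fm - F y)) (𝓝[<] t)
          (𝓝 ((1 - a - Fm) + (Fm - Fm))) :=
        Tendsto.add tendsto_const_nhds (Tendsto.sub tendsto_const_nhds hFt)
      simpa using h
    · filter_upwards [self_mem_nhdsWithin] with y hy
      exact (hslope y hy).1
    · filter_upwards [self_mem_nhdsWithin] with y hy
      exact (hslope y hy).2
end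

section
/- Let 𝒢 be a sub-σ-field of ℋ and let Q be another probability measure on (Ω, 𝒜) related to P through a prior probability shift on 𝒢: for some p, q ∈ (0,1), q = Q[A] ≠ P[A] = p, and Q[G | A] = P[G | A] and Q[G | Aᶜ] = P[G | Aᶜ] for all G ∈ 𝒢. Let Ψ_Q = Q[A | 𝒢], Ψ_P = P[A | 𝒢], and for t ∈ [0,1] set B_Q(t) = (1−t) Q[A ∩ {Ψ_Q ≤ t}] + t Q[Aᶜ ∩ {Ψ_Q > t}] and B_P(t) = (1−t) P[A ∩ {Ψ_P ≤ t}] + t P[Aᶜ ∩ {Ψ_P > t}]. Then for all 0 < t < 1, B_Q(t) / ((1−t) q) = B_P(s) / ((1−s) p), where s = ((1−q) p t) / ((p−q) t + q (1−p)). -/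
open MeasureTheory

set_option maxHeartbeats 1000000 in
/-- **Proposition 7, item 6 (prior probability shift transforms Brier curves)**: if `Q` and
`P` are related through prior probability shift on `𝒢` (same class-conditional distributions
on `𝒢`, different prior probabilities `q = Q[A] ≠ P[A] = p`), then the Brier curves of the
posterior probabilities `Ψ_Q = Q[A | 𝒢]` and `Ψ_P = P[A | 𝒢]` satisfy
`B_Q(t) / ((1 − t) q) = B_P(s) / ((1 − s) p)` with `s = (1 − q) p t / ((p − q) t + q (1 − p))`
for all `0 < t < 1`. -/
theorem brier_curve_prior_probability_shift
    {Ω : Type*} {mΩ : MeasurableSpace Ω} {P Q : Measure Ω}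
    [IsProbabilityMeasure P] [IsProbabilityMeasure Q]
    {A : Set Ω} (hA : MeasurableSet A)
    {mH : MeasurableSpace Ω} (hH : mH ≤ mΩ) (hAH : ¬ MeasurableSet[mH] A)
    {mG : MeasurableSpace Ω} (hG : mG ≤ mH)
    {p q : ℝ} (hp : p = (P A).toReal) (hq : q = (Q A).toReal)
    (hp01 : p ∈ Set.Ioo (0 : ℝ) 1) (hq01 : q ∈ Set.Ioo (0 : ℝ) 1) (hqp : q ≠ p)
    (hshiftA : ∀ G : Set Ω, MeasurableSet[mG] G → Q (G ∩ A) * P A = P (G ∩ A) * Q A)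
    (hshiftAc : ∀ G : Set Ω, MeasurableSet[mG] G → Q (G ∩ Aᶜ) * P Aᶜ = P (G ∩ Aᶜ) * Q Aᶜ)
    (BQ BP : ℝ → ℝ)
    (hBQ : ∀ t, BQ t
      = (1 - t) * (Q (A ∩ {ω | (Q[A.indicator (fun _ => (1 : ℝ)) | mG]) ω ≤ t})).toReal
        + t * (Q (Aᶜ ∩ {ω | (Q[A.indicator (fun _ => (1 : ℝ)) | mG]) ω > t})).toReal)
    (hBP : ∀ s, BP s
      = (1 - s) * (P (A ∩ {ω | (P[A.indicator (fun _ => (1 : ℝ)) | mG]) ω ≤ s})).toReal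
        + s * (P (Aᶜ ∩ {ω | (P[A.indicator (fun _ => (1 : ℝ)) | mG]) ω > s})).toReal) :
    ∀ t ∈ Set.Ioo (0 : ℝ) 1,
      BQ t / ((1 - t) * q)
        = BP ((1 - q) * p * t / ((p - q) * t + q * (1 - p)))
            / ((1 - (1 - q) * p * t / ((p - q) * t + q * (1 - p))) * p) := by
  intro t ht
  letI m0 : MeasurableSpace Ω := mΩ
  obtain ⟨ht0, ht1⟩ := ht
  obtain ⟨hp0, hp1⟩ := hp01
  obtain ⟨hq0, hq1⟩ := hq01
  have hGΩ : mG ≤ mΩ := hG.trans hH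
  have h1p : (0:ℝ) < 1 - p := by linarith
  have h1q : (0:ℝ) < 1 - q := by linarith
  have h1t : (0:ℝ) < 1 - t := by linarith
  have hd0 : (0:ℝ) < (p - q) * t + q * (1 - p) := by
    nlinarith [mul_pos ht0 (mul_pos hp0 h1q), mul_pos h1t (mul_pos hq0 h1p)]
  set s : ℝ := (1 - q) * p * t / ((p - q) * t + q * (1 - p)) with hs_def
  have hs0 : 0 < s := div_pos (by positivity) hd0
  have h1s : 1 - s = (1 - t) * (q * (1 - p)) / ((p - q) * t + q * (1 - p)) := by
    rw [hs_def, eq_div_iff hd0.ne', sub_mul, div_mul_cancel₀ _ hd0.ne']; ring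
  have h1s0 : 0 < 1 - s := by rw [h1s]; positivity
  -- general algebraic facts about the link function
  have hDgen : ∀ x : ℝ, 0 ≤ x → x ≤ 1 →
      0 < q * (1 - p) * x + p * (1 - q) * (1 - x) := by
    intro x hx0 hx1
    have hc : 0 < q * (1 - p) := mul_pos hq0 h1p
    have hd : 0 < p * (1 - q) := mul_pos hp0 h1q
    have h2 : 0 ≤ 1 - x := by linarith
    have hmin : 0 < min (q * (1 - p)) (p * (1 - q)) := lt_min hc hd
    have hle : min (q * (1 - p)) (p * (1 - q)) * x
        + min (q * (1 - p)) (p * (1 - q)) * (1 - x)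
        ≤ q * (1 - p) * x + p * (1 - q) * (1 - x) :=
      add_le_add (mul_le_mul_of_nonneg_right (min_le_left _ _) hx0)
        (mul_le_mul_of_nonneg_right (min_le_right _ _) h2)
    nlinarith [hle, hmin]
  have hgen : ∀ x : ℝ, 0 ≤ x → x ≤ 1 →
      (q * (1 - p) * x / (q * (1 - p) * x + p * (1 - q) * (1 - x)) ≤ t
        ↔ x * ((p - q) * t + q * (1 - p)) ≤ (1 - q) * p * t) := by
    intro x hx0 hx1
    have hD := hDgen x hx0 hx1
    rw [div_le_iff₀ hD]
    constructor <;> intro hle <;> nlinarith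
  have hptgen : ∀ x : ℝ, 0 ≤ x → x ≤ 1 →
      (q / p) * (q * (1 - p) * x / (q * (1 - p) * x + p * (1 - q) * (1 - x)) * x)
        + ((1 - q) / (1 - p)) * (q * (1 - p) * x / (q * (1 - p) * x + p * (1 - q) * (1 - x))
            - q * (1 - p) * x / (q * (1 - p) * x + p * (1 - q) * (1 - x)) * x)
      = (q / p) * x := by
    intro x hx0 hx1
    have hD := (hDgen x hx0 hx1).ne'
    field_simp
  -- basic measure facts
  have hPAne : P A ≠ ⊤ := measure_ne_top _ _
  have hPA0 : P A ≠ 0 := by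
    intro h; rw [hp, h] at hp0; simp at hp0
  have hPAc : (P Aᶜ).toReal = 1 - p := by
    rw [measure_compl hA hPAne, measure_univ,
      ENNReal.toReal_sub_of_le prob_le_one ENNReal.one_ne_top, ENNReal.toReal_one, hp]
  have hQAc : (Q Aᶜ).toReal = 1 - q := by
    rw [measure_compl hA (measure_ne_top _ _), measure_univ,
      ENNReal.toReal_sub_of_le prob_le_one ENNReal.one_ne_top, ENNReal.toReal_one, hq]
  have hPAc0 : P Aᶜ ≠ 0 := by
    intro h; rw [h] at hPAc; simp at hPAc; linarith
  -- real versions of the shift hypotheses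
  have hshA : ∀ G, MeasurableSet[mG] G →
      (Q (G ∩ A)).toReal * p = (P (G ∩ A)).toReal * q := by
    intro G hGm
    have h := congrArg ENNReal.toReal (hshiftA G hGm)
    rwa [ENNReal.toReal_mul, ENNReal.toReal_mul, ← hp, ← hq] at h
  have hshAc : ∀ G, MeasurableSet[mG] G →
      (Q (G ∩ Aᶜ)).toReal * (1 - p) = (P (G ∩ Aᶜ)).toReal * (1 - q) := by
    intro G hGm
    have h := congrArg ENNReal.toReal (hshiftAc G hGm)
    rwa [ENNReal.toReal_mul, ENNReal.toReal_mul, hPAc, hQAc] at h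
  -- transfer of integrals of `mG`-measurable functions
  have htrans : ∀ B : Set Ω, MeasurableSet[mΩ] B →
      (∀ G, MeasurableSet[mG] G → Q (G ∩ B) * P B = P (G ∩ B) * Q B) → P B ≠ 0 →
      ∀ u : Ω → ℝ, StronglyMeasurable[mG] u →
        ∫ ω, u ω ∂(Q.restrict B) = (Q B / P B).toReal * ∫ ω, u ω ∂(P.restrict B) := by
    intro B hB hshift hPB0 u hu
    have hPBne : P B ≠ ⊤ := measure_ne_top _ _
    have htrim : (Q.restrict B).trim hGΩ = ((Q B / P B) • P.restrict B).trim hGΩ := by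
      refine @Measure.ext Ω mG _ _ fun G hGm => ?_
      rw [trim_measurableSet_eq hGΩ hGm, trim_measurableSet_eq hGΩ hGm,
        Measure.smul_apply, Measure.restrict_apply (hGΩ G hGm),
        Measure.restrict_apply (hGΩ G hGm), smul_eq_mul]
      have hkey : Q (G ∩ B) = P (G ∩ B) * Q B / P B := by
        rw [ENNReal.eq_div_iff hPB0 hPBne, mul_comm]; exact hshift G hGm
      rw [hkey, mul_div_assoc, mul_comm]
    rw [integral_trim hGΩ hu, htrim, ← integral_trim hGΩ hu, integral_smul_measure, smul_eq_mul]
  have htransA : ∀ u : Ω → ℝ, StronglyMeasurable[mG] u →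
      ∫ ω, u ω ∂(Q.restrict A) = (q / p) * ∫ ω, u ω ∂(P.restrict A) := by
    intro u hu
    rw [htrans A hA hshiftA hPA0 u hu, ENNReal.toReal_div, ← hp, ← hq]
  have htransAc : ∀ u : Ω → ℝ, StronglyMeasurable[mG] u →
      ∫ ω, u ω ∂(Q.restrict Aᶜ) = ((1 - q) / (1 - p)) * ∫ ω, u ω ∂(P.restrict Aᶜ) := by
    intro u hu
    rw [htrans Aᶜ hA.compl hshiftAc hPAc0 u hu, ENNReal.toReal_div, hPAc, hQAc]
  -- integrability of bounded functions
  have hint : ∀ (μ : Measure Ω) [IsFiniteMeasure μ], ∀ u : Ω → ℝ,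
      AEStronglyMeasurable u μ → (∀ x, |u x| ≤ 1) → Integrable u μ := by
    intro μ _ u hu hb
    exact Integrable.mono' (integrable_const 1) hu (ae_of_all _ fun x => by simpa using hb x)
  -- the indicator function and the two posteriors
  set f : Ω → ℝ := A.indicator (fun _ => (1:ℝ)) with hf_def
  have hf_meas : StronglyMeasurable[mΩ] f := by
    exact stronglyMeasurable_const.indicator hA
  have hf_intP : Integrable f P := by
    exact Integrable.indicator (integrable_const 1) hA
  have hf_intQ : Integrable f Q := by
    exact Integrable.indicator (integrable_const 1) hA
  have hf01 : ∀ x, 0 ≤ f x ∧ f x ≤ 1 := by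
    intro x
    by_cases hx : x ∈ A <;> simp [hf_def, hx]
  set ΨP : Ω → ℝ := P[f|mG] with hΨP_def
  set ΨQ : Ω → ℝ := Q[f|mG] with hΨQ_def
  have hΨP_meas : Measurable[mG] ΨP := stronglyMeasurable_condExp.measurable
  -- truncated posterior
  set ψ : Ω → ℝ := fun ω => max 0 (min 1 (ΨP ω)) with hψ_def
  have hψ_meas : Measurable[mG] ψ := measurable_const.max (measurable_const.min hΨP_meas)
  have hψ0 : ∀ ω, 0 ≤ ψ ω := fun ω => le_max_left _ _
  have hψ1 : ∀ ω, ψ ω ≤ 1 := fun ω => max_le zero_le_one (min_le_left _ _)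
  have hψ_ae : ψ =ᵐ[P] ΨP := by
    have h0 : 0 ≤ᵐ[P] ΨP := condExp_nonneg (ae_of_all _ fun ω => (hf01 ω).1)
    have h1 : ΨP ≤ᵐ[P] fun _ => (1:ℝ) := by
      have hmono : ΨP ≤ᵐ[P] P[(fun _ => (1:ℝ))|mG] :=
        condExp_mono hf_intP (integrable_const (1:ℝ)) (ae_of_all _ fun ω => (hf01 ω).2)
      rwa [condExp_const hGΩ] at hmono
    filter_upwards [h0, h1] with ω h0ω h1ω
    have h0' : (0:ℝ) ≤ ΨP ω := h0ω
    have h1' : ΨP ω ≤ 1 := h1ω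
    simp only [hψ_def]
    rw [min_eq_right h1', max_eq_right h0']
  -- the candidate version of the Q-posterior
  set g : Ω → ℝ :=
    fun ω => q * (1 - p) * ψ ω / (q * (1 - p) * ψ ω + p * (1 - q) * (1 - ψ ω)) with hg_def
  have hDen : ∀ ω, 0 < q * (1 - p) * ψ ω + p * (1 - q) * (1 - ψ ω) := fun ω =>
    hDgen (ψ ω) (hψ0 ω) (hψ1 ω)
  have hg0 : ∀ ω, 0 ≤ g ω := by
    intro ω
    simp only [hg_def]
    exact div_nonneg (by nlinarith [hψ0 ω, mul_pos hq0 h1p]) (hDen ω).le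
  have hg1 : ∀ ω, g ω ≤ 1 := by
    intro ω
    simp only [hg_def]
    exact (div_le_one (hDen ω)).mpr (by nlinarith [hψ1 ω, mul_pos hp0 h1q])
  have hg_meas : Measurable[mG] g :=
    (hψ_meas.const_mul _).div ((hψ_meas.const_mul _).add
      ((measurable_const.sub hψ_meas).const_mul _))
  have hg_measS : StronglyMeasurable[mG] g := hg_meas.stronglyMeasurable
  -- set integrals of indicators
  have hind : ∀ (μ : Measure Ω) (G : Set Ω), MeasurableSet[mΩ] G →
      ∫ x in G, f x ∂μ = (μ (A ∩ G)).toReal := by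
    intro μ G hGm
    simp only [hf_def]
    rw [integral_indicator_const (μ := μ.restrict G) (1:ℝ) hA,
      measureReal_def, Measure.restrict_apply hA, smul_eq_mul, mul_one]
  -- the key integral identity characterizing g as the Q-posterior
  have key : ∀ G : Set Ω, MeasurableSet[mG] G →
      ∫ ω in G, g ω ∂Q = (Q (A ∩ G)).toReal := by
    intro G hGm
    have hGΩm : MeasurableSet[mΩ] G := hGΩ G hGm
    set h : Ω → ℝ := G.indicator g with hh_def
    have hh_meas : Measurable[mG] h := hg_meas.indicator hGm
    have hh_measS : StronglyMeasurable[mG] h := hh_meas.stronglyMeasurable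
    have hh_measΩ : Measurable[mΩ] h := hh_meas.mono hGΩ le_rfl
    have hh_bd : ∀ x, |h x| ≤ 1 := by
      intro x
      by_cases hx : x ∈ G
      · simp only [hh_def, Set.indicator_of_mem hx]
        rw [abs_le]; exact ⟨by linarith [hg0 x], hg1 x⟩
      · simp [hh_def, Set.indicator_of_notMem hx]
    have hhQA : Integrable h (Q.restrict A) :=
      hint _ h hh_measΩ.aestronglyMeasurable hh_bd
    have hhQAc : Integrable h (Q.restrict Aᶜ) :=
      hint _ h hh_measΩ.aestronglyMeasurable hh_bd
    have hhP : Integrable h P := hint _ h hh_measΩ.aestronglyMeasurable hh_bd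
    have hhfP : Integrable (h * f) P := by
      refine hint _ _ (hh_measΩ.aestronglyMeasurable.mul hf_meas.aestronglyMeasurable) ?_
      intro x
      rw [Pi.mul_apply, abs_mul]
      calc |h x| * |f x| ≤ 1 * 1 :=
            mul_le_mul (hh_bd x) (abs_le.mpr ⟨by linarith [(hf01 x).1], (hf01 x).2⟩)
              (abs_nonneg _) zero_le_one
        _ = 1 := mul_one 1
    have hψ_measΩ : Measurable[mΩ] ψ := hψ_meas.mono hGΩ le_rfl
    have hhψP : Integrable (fun ω => h ω * ψ ω) P := by
      refine hint _ _ (hh_measΩ.aestronglyMeasurable.mul hψ_measΩ.aestronglyMeasurable) ?_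
      intro x
      rw [abs_mul]
      calc |h x| * |ψ x| ≤ 1 * 1 :=
            mul_le_mul (hh_bd x) (abs_le.mpr ⟨by linarith [hψ0 x], hψ1 x⟩)
              (abs_nonneg _) zero_le_one
        _ = 1 := mul_one 1
    -- split the integral over Q into its restrictions to A and Aᶜ
    have hgh : ∫ ω in G, g ω ∂Q = ∫ ω, h ω ∂Q := by
      rw [hh_def]
      exact (integral_indicator (μ := Q) hGΩm).symm
    have hsplit : ∫ ω, h ω ∂Q = ∫ ω, h ω ∂(Q.restrict A) + ∫ ω, h ω ∂(Q.restrict Aᶜ) := by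
      conv_lhs => rw [← Measure.restrict_add_restrict_compl (μ := Q) hA]
      exact integral_add_measure hhQA hhQAc
    -- transfer to P
    have htA : ∫ ω, h ω ∂(Q.restrict A) = (q / p) * ∫ ω, h ω ∂(P.restrict A) :=
      htransA h hh_measS
    have htAc : ∫ ω, h ω ∂(Q.restrict Aᶜ) = ((1 - q) / (1 - p)) * ∫ ω, h ω ∂(P.restrict Aᶜ) :=
      htransAc h hh_measS
    -- rewrite the P-restricted integrals via multiplication by f
    have hPA' : ∫ ω, h ω ∂(P.restrict A) = ∫ ω, (h * f) ω ∂P := by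
      rw [← integral_indicator (μ := P) hA]
      refine integral_congr_ae (ae_of_all _ fun x => ?_)
      by_cases hx : x ∈ A <;> simp [hf_def, hx]
    have hPAc' : ∫ ω, h ω ∂(P.restrict Aᶜ) = ∫ ω, h ω ∂P - ∫ ω, (h * f) ω ∂P := by
      rw [← integral_indicator (μ := P) hA.compl, ← integral_sub hhP hhfP]
      refine integral_congr_ae (ae_of_all _ fun x => ?_)
      by_cases hx : x ∈ A <;> simp [hf_def, hx]
    -- pull-out property
    have hpull : ∫ ω, (h * f) ω ∂P = ∫ ω, h ω * ψ ω ∂P := by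
      have hmul : P[h * f|mG] =ᵐ[P] h * ΨP :=
        condExp_mul_of_stronglyMeasurable_left hh_measS hhfP hf_intP
      calc ∫ ω, (h * f) ω ∂P = ∫ ω, (P[h * f|mG]) ω ∂P := (integral_condExp hGΩ).symm
        _ = ∫ ω, (h * ΨP) ω ∂P := integral_congr_ae hmul
        _ = ∫ ω, h ω * ψ ω ∂P := by
            refine integral_congr_ae ?_
            filter_upwards [hψ_ae] with ω hω
            simp [hω]
    -- the pointwise algebraic identity
    have hpt : ∀ ω, (q / p) * (h ω * ψ ω) + ((1 - q) / (1 - p)) * (h ω - h ω * ψ ω)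
        = (q / p) * (G.indicator ψ ω) := by
      intro ω
      by_cases hω : ω ∈ G
      · simp only [hh_def, Set.indicator_of_mem hω, hg_def]
        exact hptgen (ψ ω) (hψ0 ω) (hψ1 ω)
      · simp [hh_def, Set.indicator_of_notMem hω]
    have hsub : Integrable (fun ω => h ω - h ω * ψ ω) P := hhP.sub hhψP
    have hu : Integrable (fun ω => (q / p) * (h ω * ψ ω)) P := hhψP.const_mul _
    have hv : Integrable (fun ω => ((1 - q) / (1 - p)) * (h ω - h ω * ψ ω)) P :=
      hsub.const_mul _
    have hadd : ∫ ω, ((q / p) * (h ω * ψ ω) + ((1 - q) / (1 - p)) * (h ω - h ω * ψ ω)) ∂P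
        = ∫ ω, (q / p) * (h ω * ψ ω) ∂P
          + ∫ ω, ((1 - q) / (1 - p)) * (h ω - h ω * ψ ω) ∂P := integral_add hu hv
    have hmu : ∫ ω, (q / p) * (h ω * ψ ω) ∂P = (q / p) * ∫ ω, h ω * ψ ω ∂P :=
      integral_const_mul _ _
    have hmv : ∫ ω, ((1 - q) / (1 - p)) * (h ω - h ω * ψ ω) ∂P
        = ((1 - q) / (1 - p)) * ∫ ω, (h ω - h ω * ψ ω) ∂P := integral_const_mul _ _
    have hJI : ∫ ω, (h ω - h ω * ψ ω) ∂P
        = ∫ ω, h ω ∂P - ∫ ω, h ω * ψ ω ∂P := integral_sub hhP hhψP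
    have hmid : ∫ ω, ((q / p) * (h ω * ψ ω) + ((1 - q) / (1 - p)) * (h ω - h ω * ψ ω)) ∂P
        = ∫ ω, (q / p) * (G.indicator ψ ω) ∂P :=
      integral_congr_ae (ae_of_all _ fun ω => hpt ω)
    have hR : ∫ ω, (q / p) * (G.indicator ψ ω) ∂P = (q / p) * ∫ ω in G, ψ ω ∂P := by
      rw [integral_const_mul, integral_indicator (μ := P) hGΩm]
    -- right hand side
    have hrhs : (Q (A ∩ G)).toReal = (q / p) * ∫ ω in G, ψ ω ∂P := by
      have h1 : (Q (A ∩ G)).toReal = (P (A ∩ G)).toReal * q / p := by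
        rw [eq_div_iff hp0.ne', Set.inter_comm A G]
        exact hshA G hGm
      have h2 : (P (A ∩ G)).toReal = ∫ ω in G, ψ ω ∂P := by
        rw [← hind P G hGΩm, ← setIntegral_condExp hGΩ hf_intP hGm]
        exact integral_congr_ae (ae_restrict_of_ae hψ_ae.symm)
      rw [h1, h2]; ring
    rw [hgh, hsplit, htA, htAc, hPA', hPAc', hpull, hrhs,
      ← hmu, ← hJI, ← hmv, ← hadd, hmid, hR]
  -- identify the Q-posterior
  have hg_measΩ : Measurable[mΩ] g := hg_meas.mono hGΩ le_rfl
  have hg_bd : ∀ x, |g x| ≤ 1 := fun x => abs_le.mpr ⟨by linarith [hg0 x], hg1 x⟩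
  have hgΨQ : g =ᵐ[Q] ΨQ := by
    refine ae_eq_condExp_of_forall_setIntegral_eq hGΩ hf_intQ
      (fun G hGm _ => (hint Q g hg_measΩ.aestronglyMeasurable hg_bd).integrableOn)
      (fun G hGm _ => ?_) hg_measS.aestronglyMeasurable
    rw [key G hGm, hind Q G (hGΩ G hGm)]
  -- the threshold correspondence
  have hiff : ∀ ω, g ω ≤ t ↔ ψ ω ≤ s := by
    intro ω
    simp only [hg_def]
    rw [hs_def, le_div_iff₀ hd0]
    exact hgen (ψ ω) (hψ0 ω) (hψ1 ω)
  -- the threshold set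
  set T : Set Ω := {ω | ψ ω ≤ s} with hT_def
  have hT : MeasurableSet[mG] T := hψ_meas measurableSet_Iic
  have hTc : Tᶜ = {ω | s < ψ ω} := by
    rw [hT_def, Set.compl_setOf]
    simp only [not_le]
  have hmc : ∀ (μ : Measure Ω) (S₁ S₂ B : Set Ω), S₁ =ᵐ[μ] S₂ → μ (B ∩ S₁) = μ (B ∩ S₂) := by
    intro μ S₁ S₂ B hS
    refine measure_congr ?_
    rw [Filter.eventuallyEq_set] at hS ⊢
    filter_upwards [hS] with ω hω
    simp only [Set.mem_inter_iff, hω]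
  have hsetQ : {ω | ΨQ ω ≤ t} =ᵐ[Q] T := by
    rw [Filter.eventuallyEq_set]
    filter_upwards [hgΨQ] with ω hω
    simp only [Set.mem_setOf_eq, hT_def]
    rw [← hω]
    exact hiff ω
  have hsetQc : ({ω | ΨQ ω > t} : Set Ω) =ᵐ[Q] (Tᶜ : Set Ω) := by
    rw [hTc, Filter.eventuallyEq_set]
    filter_upwards [hgΨQ] with ω hω
    simp only [Set.mem_setOf_eq, gt_iff_lt]
    rw [← hω]
    exact lt_iff_lt_of_le_iff_le (hiff ω)
  have hsetP : {ω | ΨP ω ≤ s} =ᵐ[P] T := by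
    rw [Filter.eventuallyEq_set]
    filter_upwards [hψ_ae] with ω hω
    simp only [Set.mem_setOf_eq, hT_def, hω]
  have hsetPc : ({ω | ΨP ω > s} : Set Ω) =ᵐ[P] (Tᶜ : Set Ω) := by
    rw [hTc, Filter.eventuallyEq_set]
    filter_upwards [hψ_ae] with ω hω
    simp only [Set.mem_setOf_eq, gt_iff_lt, hω]
  -- abbreviations for the four measures
  set a : ℝ := (P (A ∩ {ω | ΨP ω ≤ s})).toReal with ha_def
  set b : ℝ := (P (Aᶜ ∩ {ω | ΨP ω > s})).toReal with hb_def
  have hQa : (Q (A ∩ {ω | ΨQ ω ≤ t})).toReal = a * q / p := by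
    rw [eq_div_iff hp0.ne', ha_def, hmc Q _ T A hsetQ, hmc P _ T A hsetP,
      Set.inter_comm A T]
    exact hshA T hT
  have hQb : (Q (Aᶜ ∩ {ω | ΨQ ω > t})).toReal = b * (1 - q) / (1 - p) := by
    rw [eq_div_iff h1p.ne', hb_def, hmc Q _ Tᶜ Aᶜ hsetQc, hmc P _ Tᶜ Aᶜ hsetPc,
      Set.inter_comm Aᶜ Tᶜ]
    exact hshAc Tᶜ hT.compl
  -- final computation
  rw [hBQ t, hBP s, hQa, hQb, ← ha_def, ← hb_def]
  rw [div_eq_div_iff (mul_pos h1t hq0).ne' (mul_pos h1s0 hp0).ne']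
  rw [h1s, hs_def]
  field_simp
end
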